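/- arXiv:2511.02081 — 3 statements merged into one kernel-verified Lean document; each statement's English description precedes it below -/
import Mathlib

section
/- For every positive integer t, every minimal 3-regular instance (G = (V, E), S, r) of Steiner Rooted 1-Orientation with t Terminals satisfies |V| = 2t; in particular, the maximum number of vertices N_{1,t} of such a minimal 3-regular instance equals 2t. -/
/-- A finite loopless undirected multigraph on vertex set `verts`; the edges are
recorded as a multiset of unordered pairs, so that parallel edges are allowed. -/
structure MGraph (α : Type) where
  verts : Finset α
  edges : Multiset (Sym2 α)
  mem_verts : ∀ e ∈ edges, ∀ x ∈ e, x ∈ verts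
  loopless : ∀ e ∈ edges, ¬ e.IsDiag

namespace MGraph

variable {α : Type} [DecidableEq α]

/-- The degree of a vertex. -/
def deg (G : MGraph α) (v : α) : ℕ := (G.edges.filter (fun e => v ∈ e)).card

/-- `p` is the vertex sequence of a path in `G` from `u` to `v`. -/
def IsPath (G : MGraph α) (p : List α) (u v : α) : Prop :=
  p.Nodup ∧ p.head? = some u ∧ p.getLast? = some v ∧
    (∀ x ∈ p, x ∈ G.verts) ∧ List.Chain' (fun x y => s(x, y) ∈ G.edges) p

/-- The multiset of edges traversed by a path given by its vertex sequence. -/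
def pathEdges (p : List α) : Multiset (Sym2 α) :=
  ↑((p.zip p.tail).map fun xy => s(xy.1, xy.2))

/-- Delete (one copy of) the edge `e` from `G`. -/
def delEdge (G : MGraph α) (e : Sym2 α) : MGraph α where
  verts := G.verts
  edges := G.edges.erase e
  mem_verts := fun a ha => G.mem_verts a (Multiset.mem_of_mem_erase ha)
  loopless := fun a ha => G.loopless a (Multiset.mem_of_mem_erase ha)

end MGraph

/-- A finite loopless directed multigraph on vertex set `verts`; the arcs are
recorded as a multiset of ordered pairs `(tail, head)`, so that parallel arcs
are allowed. -/
structure MDigraph (α : Type) where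
  verts : Finset α
  arcs : Multiset (α × α)
  tail_mem : ∀ e ∈ arcs, e.1 ∈ verts
  head_mem : ∀ e ∈ arcs, e.2 ∈ verts
  loopless : ∀ e ∈ arcs, e.1 ≠ e.2

namespace MDigraph

variable {α : Type} [DecidableEq α]

/-- `p` is the vertex sequence of a directed path in `D` from `u` to `v`. -/
def IsDipath (D : MDigraph α) (p : List α) (u v : α) : Prop :=
  p.Nodup ∧ p.head? = some u ∧ p.getLast? = some v ∧
    (∀ x ∈ p, x ∈ D.verts) ∧ List.Chain' (fun x y => (x, y) ∈ D.arcs) p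

/-- The multiset of arcs traversed by a directed path given by its vertex sequence. -/
def pathArcs (p : List α) : Multiset (α × α) := ↑(p.zip p.tail)

/-- There exist `k` pairwise arc-disjoint directed paths from `u` to `v` in `D`
(each copy of an arc may be used by at most one of the paths). -/
def HasArcDisjointPaths (D : MDigraph α) (u v : α) (k : ℕ) : Prop :=
  ∃ P : Fin k → List α, (∀ i, D.IsDipath (P i) u v) ∧
    (∑ i : Fin k, pathArcs (P i)) ≤ D.arcs

/-- `D` is Steiner rooted `k`-arc-connected with root `r` and terminal set `S`:
for every terminal `s ∈ S` there are `k` pairwise arc-disjoint directed `r`-`s` paths. -/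
def SteinerRooted (D : MDigraph α) (r : α) (S : Finset α) (k : ℕ) : Prop :=
  ∀ s ∈ S, D.HasArcDisjointPaths r s k

/-- The in-degree of a vertex. -/
def inDeg (D : MDigraph α) (v : α) : ℕ := (D.arcs.filter (fun e => e.2 = v)).card

/-- The out-degree of a vertex. -/
def outDeg (D : MDigraph α) (v : α) : ℕ := (D.arcs.filter (fun e => e.1 = v)).card

/-- The number of arcs leaving the vertex set `X` (tail in `X`, head outside `X`). -/
def outDegOf (D : MDigraph α) (X : Finset α) : ℕ :=
  (D.arcs.filter (fun e => e.1 ∈ X ∧ e.2 ∉ X)).card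

/-- `D` is `3`-regular with respect to root `r`, terminal set `S` and connectivity `k`:
the root has in-degree `0` and out-degree `k`, every terminal has in-degree `k` and
out-degree `0`, and every other vertex has in-degree plus out-degree equal to `3`. -/
def ThreeRegular (D : MDigraph α) (r : α) (S : Finset α) (k : ℕ) : Prop :=
  D.inDeg r = 0 ∧ D.outDeg r = k ∧ (∀ s ∈ S, D.inDeg s = k ∧ D.outDeg s = 0) ∧
    ∀ v ∈ D.verts, v ≠ r → v ∉ S → D.inDeg v + D.outDeg v = 3

/-- Delete (one copy of) the arc `e` from `D`. -/
def delArc (D : MDigraph α) (e : α × α) : MDigraph α where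
  verts := D.verts
  arcs := D.arcs.erase e
  tail_mem := fun a ha => D.tail_mem a (Multiset.mem_of_mem_erase ha)
  head_mem := fun a ha => D.head_mem a (Multiset.mem_of_mem_erase ha)
  loopless := fun a ha => D.loopless a (Multiset.mem_of_mem_erase ha)

/-- `D` is minimally Steiner rooted `k`-arc-connected: it is Steiner rooted
`k`-arc-connected but deleting any arc destroys this property. -/
def MinSteinerRooted (D : MDigraph α) (r : α) (S : Finset α) (k : ℕ) : Prop :=
  D.SteinerRooted r S k ∧ ∀ e ∈ D.arcs, ¬ (D.delArc e).SteinerRooted r S k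

/-- `U` is a tight `s`-cut: `r ∈ U`, `s ∉ U`, and exactly `k` arcs leave `U`. -/
def IsTightCut (D : MDigraph α) (r s : α) (k : ℕ) (U : Finset α) : Prop :=
  r ∈ U ∧ s ∉ U ∧ D.outDegOf U = k

/-- The multiset of arcs of a directed cycle given by its vertex sequence. -/
def cycleArcs (c : List α) : Multiset (α × α) := ↑(c.zip (c.rotate 1))

/-- `c` is the vertex sequence of a directed cycle in `D`. -/
def IsDicycle (D : MDigraph α) (c : List α) : Prop :=
  c.Nodup ∧ 2 ≤ c.length ∧ cycleArcs c ≤ D.arcs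

end MDigraph

namespace MGraph

variable {α : Type} [DecidableEq α]

/-- `D` is an orientation of the multigraph `G`. -/
def IsOrientation (G : MGraph α) (D : MDigraph α) : Prop :=
  D.verts = G.verts ∧ D.arcs.map (fun e => s(e.1, e.2)) = G.edges

/-- The instance `(G, S, r)` admits a feasible orientation, i.e. an orientation
that is Steiner rooted `k`-arc-connected. -/
def Feasible (G : MGraph α) (r : α) (S : Finset α) (k : ℕ) : Prop :=
  ∃ D : MDigraph α, G.IsOrientation D ∧ D.SteinerRooted r S k

/-- `(G, S, r)` is a `3`-regular instance: the root `r` and every terminal have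
degree exactly `k`, and every other vertex has degree exactly `3`. -/
def ThreeRegularInstance (G : MGraph α) (r : α) (S : Finset α) (k : ℕ) : Prop :=
  G.deg r = k ∧ (∀ s ∈ S, G.deg s = k) ∧
    ∀ v ∈ G.verts, v ≠ r → v ∉ S → G.deg v = 3

/-- `(G, S, r)` is a minimal instance: it admits a feasible orientation, but the
deletion of any edge destroys all feasible orientations. -/
def MinimalInstance (G : MGraph α) (r : α) (S : Finset α) (k : ℕ) : Prop :=
  G.Feasible r S k ∧ ∀ e ∈ G.edges, ¬ (G.delEdge e).Feasible r S k

end MGraph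

open Relation

-- list lemmas here (from aux1, without import)


theorem chain'_reflTransGen {α : Type} {R : α → α → Prop} :
    ∀ {p : List α} {u v : α}, List.Chain' R p → p.head? = some u → p.getLast? = some v →
      ReflTransGen R u v := by
  intro p
  induction p with
  | nil => intro u v _ h; simp at h
  | cons a q ih =>
    intro u v hc hh hl
    simp at hh; subst hh
    cases q with
    | nil => simp at hl; subst hl; exact .refl
    | cons b q' =>
      have hc' : List.Chain' R (b :: q') := hc.tail
      have hR : R a b := (List.isChain_cons_cons.mp hc).1
      have hl' : (b :: q').getLast? = some v := by
        rwa [List.getLast?_cons_cons] at hl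
      exact .trans (.single hR) (ih hc' rfl hl')

theorem reflTransGen_exists_chain {α : Type} {R : α → α → Prop} {u v : α}
    (h : ReflTransGen R u v) :
    ∃ p : List α, p.head? = some u ∧ p.getLast? = some v ∧ List.Chain' R p := by
  induction h with
  | refl => exact ⟨[u], rfl, rfl, List.isChain_singleton u⟩
  | tail _ hbc ih =>
    obtain ⟨p, hh, hl, hc⟩ := ih
    rename_i b c _
    refine ⟨p ++ [c], ?_, ?_, ?_⟩
    · cases p with
      | nil => simp at hh
      | cons a q => simpa using hh
    · simp
    · apply List.isChain_append.mpr
      refine ⟨hc, List.isChain_singleton c, ?_⟩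
      intro x hx y hy
      simp at hy; subst hy
      rw [hl] at hx; simp at hx; subst hx; exact hbc

theorem mem_zip_of_chain' {α : Type} {R : α → α → Prop} :
    ∀ {p : List α}, List.Chain' R p → ∀ x y, (x, y) ∈ p.zip p.tail → R x y := by
  intro p
  induction p with
  | nil => intro _ x y h; simp at h
  | cons a q ih =>
    intro hc x y h
    cases q with
    | nil => simp at h
    | cons b q' =>
      simp only [List.tail_cons, List.zip_cons_cons, List.mem_cons] at h
      rcases h with h | h
      · cases h; exact (List.isChain_cons_cons.mp hc).1
      · exact ih hc.tail x y (by simpa using h)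

theorem nodup_zip_left {α β : Type} :
    ∀ {l : List α} {l' : List β}, l.Nodup → (l.zip l').Nodup := by
  intro l
  induction l with
  | nil => intro l' _; simp
  | cons a q ih =>
    intro l' h
    cases l' with
    | nil => simp
    | cons b q' =>
      rw [List.zip_cons_cons, List.nodup_cons]
      refine ⟨fun hm => ?_, ih (List.nodup_cons.mp h).2⟩
      exact (List.nodup_cons.mp h).1 (List.of_mem_zip hm).1


set_option linter.unusedSectionVars false

namespace MGraph

variable {α : Type} [DecidableEq α]

/-- Undirected reachability in a multigraph. -/
def Reach (G : MGraph α) (u v : α) : Prop :=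
  ReflTransGen (fun x y => s(x, y) ∈ G.edges) u v

theorem Reach.closed {G : MGraph α} {Q : α → Prop}
    (hQ : ∀ x y, s(x, y) ∈ G.edges → Q x → Q y) {u v : α} (hu : Q u)
    (h : G.Reach u v) : Q v := by
  induction h with
  | refl => exact hu
  | tail _ he ih => exact hQ _ _ he ih

theorem Reach.mem_verts {G : MGraph α} {u v : α} (h : G.Reach u v) (hu : u ∈ G.verts) :
    v ∈ G.verts :=
  h.closed (fun x y he _ => G.mem_verts _ he y (by simp)) hu

/-- `v` can be reached from `r` by a walk with `n` edges. -/
def StepsTo (G : MGraph α) (r v : α) (n : ℕ) : Prop :=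
  ∃ p : List α, p.length = n + 1 ∧ p.head? = some r ∧ p.getLast? = some v ∧
    List.Chain' (fun x y => s(x, y) ∈ G.edges) p

theorem Reach.exists_stepsTo {G : MGraph α} {r v : α} (h : G.Reach r v) :
    ∃ n, G.StepsTo r v n := by
  obtain ⟨p, hh, hl, hc⟩ := reflTransGen_exists_chain h
  have hp : p ≠ [] := by intro h0; rw [h0] at hh; simp at hh
  refine ⟨p.length - 1, p, ?_, hh, hl, hc⟩
  have := List.length_pos_iff.mpr hp
  omega

theorem reach_of_stepsTo {G : MGraph α} {r v : α} {n : ℕ} (h : G.StepsTo r v n) :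
    G.Reach r v := by
  obtain ⟨p, _, hh, hl, hc⟩ := h
  exact chain'_reflTransGen hc hh hl

open Classical in
/-- Distance from the root. -/
noncomputable def dist (G : MGraph α) (r v : α) : ℕ :=
  if h : ∃ n, G.StepsTo r v n then Nat.find h else 0

theorem dist_spec {G : MGraph α} {r v : α} (h : G.Reach r v) :
    G.StepsTo r v (G.dist r v) := by
  classical
  have he := h.exists_stepsTo
  rw [dist, dif_pos he]
  exact Nat.find_spec he

theorem dist_le {G : MGraph α} {r v : α} {n : ℕ} (h : G.StepsTo r v n) :
    G.dist r v ≤ n := by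
  classical
  have he : ∃ n, G.StepsTo r v n := ⟨n, h⟩
  rw [dist, dif_pos he]
  exact Nat.find_le h

theorem dist_self (G : MGraph α) (r : α) : G.dist r r = 0 := by
  have h : G.StepsTo r r 0 := ⟨[r], rfl, rfl, rfl, List.isChain_singleton r⟩
  exact Nat.le_zero.mp (dist_le h)

theorem exists_parent {G : MGraph α} {r v : α} (h : G.Reach r v) (hv : v ≠ r) :
    ∃ u, s(u, v) ∈ G.edges ∧ G.Reach r u ∧ G.dist r u < G.dist r v := by
  obtain ⟨p, hlen, hh, hl, hc⟩ := dist_spec h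
  rcases p.eq_nil_or_concat with rfl | ⟨q', b, hpq⟩
  · simp at hh
  rw [List.concat_eq_append] at hpq
  subst hpq
  have hb : b = v := by simpa using hl
  have hq'ne : q' ≠ [] := by
    rintro rfl
    simp at hh
    exact hv (hb.symm.trans hh)
  obtain ⟨w, hw⟩ : ∃ w, q'.getLast? = some w := by
    cases hq'' : q'.getLast? with
    | none => exact absurd (List.getLast?_eq_none_iff.mp hq'') hq'ne
    | some w => exact ⟨w, rfl⟩
  replace hc := List.isChain_append.mp hc
  obtain ⟨hcq, -, hlast⟩ := hc
  have hedge : s(w, v) ∈ G.edges := by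
    have := hlast w hw b rfl
    rwa [hb] at this
  have hhq' : q'.head? = some r := by
    rw [List.head?_append_of_ne_nil q' hq'ne] at hh
    exact hh
  have hsteps : G.StepsTo r w (q'.length - 1) := by
    refine ⟨q', ?_, hhq', hw, hcq⟩
    have := List.length_pos_iff.mpr hq'ne
    omega
  have hlq : q'.length = G.dist r v := by
    simp at hlen; omega
  have hdw : G.dist r w < G.dist r v := by
    have h1 := dist_le hsteps
    have h2 := List.length_pos_iff.mpr hq'ne
    omega
  exact ⟨w, hedge, reach_of_stepsTo hsteps, hdw⟩

open Classical in
/-- Parent of `v` in a BFS tree rooted at `r`. -/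
noncomputable def parent (G : MGraph α) (r v : α) : α :=
  if h : G.Reach r v ∧ v ≠ r then Classical.choose (exists_parent h.1 h.2) else v

theorem parent_spec {G : MGraph α} {r v : α} (h : G.Reach r v) (hv : v ≠ r) :
    s(G.parent r v, v) ∈ G.edges ∧ G.Reach r (G.parent r v) ∧
      G.dist r (G.parent r v) < G.dist r v := by
  rw [parent, dif_pos ⟨h, hv⟩]
  exact Classical.choose_spec (exists_parent h hv)

/-- Injectivity of the tree-edge map. -/
theorem treeEdge_inj {G : MGraph α} {r v w : α} (hv : G.Reach r v) (hv' : v ≠ r)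
    (hw : G.Reach r w) (hw' : w ≠ r)
    (h : s(G.parent r v, v) = s(G.parent r w, w)) : v = w := by
  rw [Sym2.eq_iff] at h
  rcases h with ⟨-, h⟩ | ⟨h1, h2⟩
  · exact h.symm ▸ rfl
  · exfalso
    have d1 := (parent_spec hv hv').2.2
    have d2 := (parent_spec hw hw').2.2
    rw [h1] at d1; rw [← h2] at d2; omega

end MGraph
namespace MGraph

variable {α : Type} [DecidableEq α]

theorem reach_of_feasible {G : MGraph α} {r : α} {S : Finset α}
    (h : G.Feasible r S 1) : ∀ s ∈ S, G.Reach r s := by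
  obtain ⟨D, ⟨hverts, harcs⟩, hsr⟩ := h
  intro s hs
  obtain ⟨P, hP, -⟩ := hsr s hs
  obtain ⟨-, hh, hl, -, hc⟩ := hP 0
  have h1 : Relation.ReflTransGen (fun x y => (x, y) ∈ D.arcs) r s :=
    chain'_reflTransGen hc hh hl
  refine Relation.ReflTransGen.mono ?_ _ _ h1
  intro x y hxy
  have := Multiset.mem_map_of_mem (fun e : α × α => s(e.1, e.2)) hxy
  rwa [harcs] at this

open Classical in
/-- Orient each edge; tree edges of the BFS tree from `r` point away from `r`. -/
noncomputable def orientFn (G : MGraph α) (r : α) : Sym2 α → α × α := fun e =>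
  if h : ∃ v, G.Reach r v ∧ v ≠ r ∧ e = s(G.parent r v, v)
  then (G.parent r h.choose, h.choose) else Quot.out e

theorem orientFn_mk (G : MGraph α) (r : α) (e : Sym2 α) :
    s((G.orientFn r e).1, (G.orientFn r e).2) = e := by
  classical
  rw [orientFn]
  split
  · next h => exact (h.choose_spec.2.2).symm
  · show Sym2.mk _ _ = e
    exact e.out_eq

theorem orientFn_tree {G : MGraph α} {r v : α} (hv : G.Reach r v) (hv' : v ≠ r) :
    G.orientFn r s(G.parent r v, v) = (G.parent r v, v) := by
  classical
  rw [orientFn]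
  have hex : ∃ w, G.Reach r w ∧ w ≠ r ∧ s(G.parent r v, v) = s(G.parent r w, w) :=
    ⟨v, hv, hv', rfl⟩
  rw [dif_pos hex]
  obtain ⟨h1, h2, h3⟩ := hex.choose_spec
  have := treeEdge_inj hv hv' h1 h2 h3
  rw [← this]

/-- The canonical orientation of `G` from root `r`. -/
noncomputable def orient (G : MGraph α) (r : α) : MDigraph α where
  verts := G.verts
  arcs := G.edges.map (G.orientFn r)
  tail_mem := by
    intro a ha
    obtain ⟨e, he, rfl⟩ := Multiset.mem_map.mp ha
    have hm := Sym2.mem_mk_left (G.orientFn r e).1 (G.orientFn r e).2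
    rw [orientFn_mk G r e] at hm
    exact G.mem_verts e he _ hm
  head_mem := by
    intro a ha
    obtain ⟨e, he, rfl⟩ := Multiset.mem_map.mp ha
    have hm := Sym2.mem_mk_right (G.orientFn r e).1 (G.orientFn r e).2
    rw [orientFn_mk G r e] at hm
    exact G.mem_verts e he _ hm
  loopless := by
    intro a ha
    obtain ⟨e, he, rfl⟩ := Multiset.mem_map.mp ha
    have hd := G.loopless e he
    rw [← orientFn_mk G r e] at hd
    simpa using hd

theorem orient_isOrientation (G : MGraph α) (r : α) : G.IsOrientation (G.orient r) := by
  refine ⟨rfl, ?_⟩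
  show (G.edges.map (G.orientFn r)).map _ = G.edges
  rw [Multiset.map_map]
  rw [show ((fun e : α × α => s(e.1, e.2)) ∘ G.orientFn r) = id from ?_, Multiset.map_id]
  funext e
  exact orientFn_mk G r e

theorem tree_arc_mem {G : MGraph α} {r v : α} (hv : G.Reach r v) (hv' : v ≠ r) :
    (G.parent r v, v) ∈ (G.orient r).arcs := by
  have h1 : s(G.parent r v, v) ∈ G.edges := (parent_spec hv hv').1
  have h2 := Multiset.mem_map_of_mem (G.orientFn r) h1
  rwa [orientFn_tree hv hv'] at h2

theorem exists_dipath {G : MGraph α} {r : α} (hr : r ∈ G.verts) :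
    ∀ {v : α}, G.Reach r v →
    ∃ p : List α, p.head? = some r ∧ p.getLast? = some v ∧ (∀ x ∈ p, x ∈ G.verts) ∧
      List.Chain' (fun x y => (x, y) ∈ (G.orient r).arcs) p ∧
      List.Chain' (fun x y => G.dist r x < G.dist r y) p := by
  have key : ∀ n v, G.Reach r v → G.dist r v = n →
      ∃ p : List α, p.head? = some r ∧ p.getLast? = some v ∧ (∀ x ∈ p, x ∈ G.verts) ∧
        List.Chain' (fun x y => (x, y) ∈ (G.orient r).arcs) p ∧
        List.Chain' (fun x y => G.dist r x < G.dist r y) p := by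
    intro n
    induction n using Nat.strong_induction_on with
    | _ n ih =>
      intro v hv hd
      by_cases hvr : v = r
      · exact ⟨[v], by simp [hvr], by simp [hvr], by simpa using hvr ▸ hr,
          List.isChain_singleton v, List.isChain_singleton v⟩
      · obtain ⟨hedge, hreach, hlt⟩ := parent_spec hv hvr
        obtain ⟨p, hh, hl, hmem, hc1, hc2⟩ :=
          ih (G.dist r (G.parent r v)) (hd ▸ hlt) (G.parent r v) hreach rfl
        have hpne : p ≠ [] := by rintro rfl; simp at hh
        refine ⟨p ++ [v], ?_, by simp, ?_, ?_, ?_⟩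
        · rwa [List.head?_append_of_ne_nil p hpne]
        · intro x hx
          rcases List.mem_append.mp hx with hx | hx
          · exact hmem x hx
          · simp at hx; subst hx; exact hv.mem_verts hr
        · apply List.isChain_append.mpr
          refine ⟨hc1, List.isChain_singleton v, ?_⟩
          intro x hx y hy
          simp at hy; subst hy
          rw [hl] at hx; simp at hx; subst hx
          exact tree_arc_mem hv hvr
        · apply List.isChain_append.mpr
          refine ⟨hc2, List.isChain_singleton v, ?_⟩
          intro x hx y hy
          simp at hy; subst hy
          rw [hl] at hx; simp at hx; subst hx
          exact hlt
  intro v hv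
  exact key (G.dist r v) v hv rfl

theorem feasible_of_reach {G : MGraph α} {r : α} {S : Finset α} (hr : r ∈ G.verts)
    (h : ∀ s ∈ S, G.Reach r s) : G.Feasible r S 1 := by
  refine ⟨G.orient r, orient_isOrientation G r, ?_⟩
  intro s hs
  obtain ⟨p, hh, hl, hmem, hc1, hc2⟩ := exists_dipath hr (h s hs)
  have hnodup : p.Nodup := by
    haveI : IsTrans α (fun x y => G.dist r x < G.dist r y) :=
      ⟨fun _ _ _ h1 h2 => lt_trans h1 h2⟩
    have hpw : p.Pairwise (fun x y => G.dist r x < G.dist r y) :=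
      (List.isChain_iff_pairwise.mp hc2)
    exact hpw.imp (fun h => by intro he; subst he; omega)
  refine ⟨fun _ => p, fun _ => ⟨hnodup, hh, hl, hmem, hc1⟩, ?_⟩
  rw [Fin.sum_univ_one]
  show (↑(p.zip p.tail) : Multiset (α × α)) ≤ (G.orient r).arcs
  rw [Multiset.le_iff_subset (by exact Multiset.coe_nodup.mpr (nodup_zip_left hnodup))]
  intro a ha
  rw [Multiset.mem_coe] at ha
  exact mem_zip_of_chain' hc1 a.1 a.2 (by rwa [Prod.mk.eta])

end MGraph
namespace MGraph

variable {α : Type} [DecidableEq α]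

theorem reach_all_of_minimal {G : MGraph α} {r : α} {S : Finset α}
    (hr : r ∈ G.verts) (h3 : G.ThreeRegularInstance r S 1)
    (hmin : G.MinimalInstance r S 1) : ∀ v ∈ G.verts, G.Reach r v := by
  have hterm : ∀ s ∈ S, G.Reach r s := reach_of_feasible hmin.1
  intro v hv
  by_contra hnr
  have hvr : v ≠ r := by rintro rfl; exact hnr Relation.ReflTransGen.refl
  have hvS : v ∉ S := fun hm => hnr (hterm v hm)
  have hdeg : G.deg v = 3 := h3.2.2 v hv hvr hvS
  have hpos : 0 < Multiset.card (G.edges.filter (fun e => v ∈ e)) := by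
    rw [← deg]; omega
  obtain ⟨e, hef⟩ := Multiset.card_pos_iff_exists_mem.mp hpos
  have he : e ∈ G.edges := Multiset.mem_of_mem_filter hef
  have hve : v ∈ e := (Multiset.mem_filter.mp hef).2
  have hreach' : ∀ s ∈ S, (G.delEdge e).Reach r s := by
    intro s hs
    refine (hterm s hs).closed (Q := fun x => (G.delEdge e).Reach r x) ?_ .refl
    intro x y hxy hx
    have hxG : G.Reach r x := Relation.ReflTransGen.mono
      (by intro a b hab; exact Multiset.mem_of_mem_erase hab) _ _ hx
    have hne : s(x, y) ≠ e := by
      intro heq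
      rw [← heq] at hve
      rcases Sym2.mem_iff.mp hve with rfl | rfl
      · exact hnr hxG
      · exact hnr (hxG.tail hxy)
    exact hx.tail ((Multiset.mem_erase_of_ne hne).mpr hxy)
  exact hmin.2 e he (feasible_of_reach hr hreach')

theorem edges_eq_tree {G : MGraph α} {r : α} {S : Finset α}
    (hr : r ∈ G.verts) (hS : ↑S ⊆ (G.verts : Set α)) (h3 : G.ThreeRegularInstance r S 1)
    (hmin : G.MinimalInstance r S 1) :
    G.edges = (G.verts.erase r).val.map (fun v => s(G.parent r v, v)) := by
  have hall := reach_all_of_minimal hr h3 hmin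
  set T := (G.verts.erase r).val.map (fun v => s(G.parent r v, v)) with hT
  have hmemv : ∀ v ∈ G.verts.erase r, v ∈ G.verts ∧ v ≠ r := by
    intro v hv
    exact ⟨Finset.mem_of_mem_erase hv, Finset.ne_of_mem_erase hv⟩
  have hTnodup : T.Nodup := by
    refine Multiset.Nodup.map_on ?_ (G.verts.erase r).nodup
    intro v hv w hw hvw
    obtain ⟨hv1, hv2⟩ := hmemv v hv
    obtain ⟨hw1, hw2⟩ := hmemv w hw
    exact treeEdge_inj (hall v hv1) hv2 (hall w hw1) hw2 hvw
  have hTsub : T ⊆ G.edges := by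
    intro e heT
    obtain ⟨v, hv, rfl⟩ := Multiset.mem_map.mp heT
    obtain ⟨hv1, hv2⟩ := hmemv v hv
    exact (parent_spec (hall v hv1) hv2).1
  have hTle : T ≤ G.edges := (Multiset.le_iff_subset hTnodup).mpr hTsub
  by_contra hne
  have hlt : T < G.edges := lt_of_le_of_ne hTle (by rw [hT] at hne ⊢; exact fun h => hne h.symm)
  obtain ⟨e, hecons⟩ := Multiset.lt_iff_cons_le.mp hlt
  have he : e ∈ G.edges := Multiset.mem_of_le hecons (Multiset.mem_cons_self e T)
  have hTle' : T ≤ G.edges.erase e := by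
    have := Multiset.erase_le_erase e hecons
    rwa [Multiset.erase_cons_head] at this
  -- all vertices reachable in `G.delEdge e`
  have key : ∀ n, ∀ v ∈ G.verts, G.dist r v = n → (G.delEdge e).Reach r v := by
    intro n
    induction n using Nat.strong_induction_on with
    | _ n ih =>
      intro v hv hd
      by_cases hvr : v = r
      · rw [hvr]; exact Relation.ReflTransGen.refl
      · have hreach := hall v hv
        obtain ⟨hedge, hpre, hlt'⟩ := parent_spec hreach hvr
        have hmemT : s(G.parent r v, v) ∈ T :=
          Multiset.mem_map_of_mem _ (Finset.mem_erase.mpr ⟨hvr, hv⟩)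
        have hmemdel : s(G.parent r v, v) ∈ (G.delEdge e).edges :=
          Multiset.mem_of_le hTle' hmemT
        have hpv : G.parent r v ∈ G.verts :=
          G.mem_verts _ hedge _ (Sym2.mem_mk_left _ _)
        exact ((ih (G.dist r (G.parent r v)) (hd ▸ hlt') _ hpv rfl).tail hmemdel)
  have hreach' : ∀ s ∈ S, (G.delEdge e).Reach r s := by
    intro s hs
    exact key (G.dist r s) s (hS hs) rfl
  exact hmin.2 e he (feasible_of_reach hr hreach')

theorem handshake_aux (V : Finset α) :
    ∀ (m : Multiset (Sym2 α)), (∀ e ∈ m, ¬e.IsDiag ∧ ∀ x ∈ e, x ∈ V) →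
      ∑ v ∈ V, Multiset.countP (fun e => v ∈ e) m = 2 * Multiset.card m := by
  intro m
  induction m using Multiset.induction_on with
  | empty => simp
  | cons e m ih =>
    induction e using Sym2.inductionOn with
    | _ a b =>
      intro hm
      have hme : ¬(s(a, b)).IsDiag ∧ ∀ x ∈ s(a, b), x ∈ V :=
        hm _ (Multiset.mem_cons_self _ m)
      have hm' : ∀ f ∈ m, ¬f.IsDiag ∧ ∀ x ∈ f, x ∈ V :=
        fun f hf => hm f (Multiset.mem_cons_of_mem hf)
      simp only [Multiset.countP_cons, Multiset.card_cons]
      rw [Finset.sum_add_distrib, ih hm']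
      have hab : a ≠ b := by simpa using hme.1
      have ha : a ∈ V := hme.2 a (Sym2.mem_mk_left a b)
      have hb : b ∈ V := hme.2 b (Sym2.mem_mk_right a b)
      have h2 : (∑ v ∈ V, if v ∈ s(a, b) then 1 else 0) = 2 := by
        rw [← Finset.card_filter]
        have hfil : V.filter (fun v => v ∈ s(a, b)) = {a, b} := by
          ext x
          simp only [Finset.mem_filter, Sym2.mem_iff, Finset.mem_insert,
            Finset.mem_singleton]
          constructor
          · exact fun h => h.2
          · rintro (rfl | rfl) <;> simp [ha, hb]
        rw [hfil, Finset.card_pair hab]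
      omega

theorem card_eq_of_minimal {G : MGraph α} {r : α} {S : Finset α} {t : ℕ}
    (hrS : r ∉ S) (hScard : S.card = t) (hr : r ∈ G.verts)
    (hS : ↑S ⊆ (G.verts : Set α)) (h3 : G.ThreeRegularInstance r S 1)
    (hmin : G.MinimalInstance r S 1) : G.verts.card = 2 * t := by
  have hedges := edges_eq_tree hr hS h3 hmin
  have hcard : Multiset.card G.edges = G.verts.card - 1 := by
    rw [hedges, Multiset.card_map]
    show (G.verts.erase r).card = _
    rw [Finset.card_erase_of_mem hr]
  have hhs : ∑ v ∈ G.verts, G.deg v = 2 * Multiset.card G.edges := by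
    have h := handshake_aux G.verts G.edges (fun e he => ⟨G.loopless e he, G.mem_verts e he⟩)
    rw [← h]
    refine Finset.sum_congr rfl fun v _ => ?_
    rw [deg, Multiset.countP_eq_card_filter]
  have hsub : insert r S ⊆ G.verts := by
    intro x hx
    rcases Finset.mem_insert.mp hx with rfl | hx
    · exact hr
    · exact hS hx
  have hsplit : ∑ v ∈ G.verts \ insert r S, G.deg v + ∑ v ∈ insert r S, G.deg v
      = ∑ v ∈ G.verts, G.deg v := Finset.sum_sdiff hsub
  have h1 : ∑ v ∈ insert r S, G.deg v = 1 + t := by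
    rw [Finset.sum_insert hrS, h3.1]
    have : ∑ v ∈ S, G.deg v = ∑ _v ∈ S, 1 :=
      Finset.sum_congr rfl fun v hv => h3.2.1 v hv
    rw [this, Finset.sum_const, smul_eq_mul, mul_one, hScard]
  have h2 : ∑ v ∈ G.verts \ insert r S, G.deg v = 3 * (G.verts.card - (t + 1)) := by
    have hdeg3 : ∀ v ∈ G.verts \ insert r S, G.deg v = 3 := by
      intro v hv
      obtain ⟨hv1, hv2⟩ := Finset.mem_sdiff.mp hv
      exact h3.2.2 v hv1 (fun h => hv2 (by rw [h]; exact Finset.mem_insert_self r S))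
        (fun h => hv2 (Finset.mem_insert_of_mem h))
    rw [Finset.sum_congr rfl hdeg3, Finset.sum_const, smul_eq_mul,
      Finset.card_sdiff_of_subset hsub, Finset.card_insert_of_notMem hrS, hScard, mul_comm]
  have hle : t + 1 ≤ G.verts.card := by
    have h := Finset.card_le_card hsub
    rwa [Finset.card_insert_of_notMem hrS, hScard] at h
  omega

end MGraph
namespace MGraph

variable {α : Type} [DecidableEq α]

/-- The tree graph determined by a parent function `P` on `V` rooted at `r`. -/
def treeGraph (P : α → α) (V : Finset α) (r : α)
    (hmem : ∀ v ∈ V, P v ∈ V) (hne : ∀ v ∈ V, v ≠ r → P v ≠ v) : MGraph α where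
  verts := V
  edges := (V.erase r).val.map fun v => s(P v, v)
  mem_verts := by
    intro e he x hx
    obtain ⟨v, hv, rfl⟩ := Multiset.mem_map.mp he
    have hv' : v ∈ V := Finset.mem_of_mem_erase hv
    rcases Sym2.mem_iff.mp hx with rfl | rfl
    · exact hmem v hv'
    · exact hv'
  loopless := by
    intro e he
    obtain ⟨v, hv, rfl⟩ := Multiset.mem_map.mp he
    simpa using hne v (Finset.mem_of_mem_erase hv) (Finset.ne_of_mem_erase hv)

section TreeGraph

variable {P : α → α} {V : Finset α} {r : α}
  (hmem : ∀ v ∈ V, P v ∈ V) (hne : ∀ v ∈ V, v ≠ r → P v ≠ v)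

theorem treeGraph_reach {d : α → ℕ} (hd : ∀ v ∈ V, v ≠ r → d (P v) < d v) :
    ∀ v ∈ V, (treeGraph P V r hmem hne).Reach r v := by
  have key : ∀ n, ∀ v ∈ V, d v = n → (treeGraph P V r hmem hne).Reach r v := by
    intro n
    induction n using Nat.strong_induction_on with
    | _ n ih =>
      intro v hv hdv
      by_cases hvr : v = r
      · rw [hvr]; exact Relation.ReflTransGen.refl
      · have hPv : P v ∈ V := hmem v hv
        have hedge : s(P v, v) ∈ (treeGraph P V r hmem hne).edges :=
          Multiset.mem_map_of_mem _ (Finset.mem_erase.mpr ⟨hvr, hv⟩)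
        exact (ih (d (P v)) (hdv ▸ hd v hv hvr) (P v) hPv rfl).tail hedge
  intro v hv
  exact key (d v) v hv rfl

theorem treeGraph_edge_inj {d : α → ℕ} (hd : ∀ v ∈ V, v ≠ r → d (P v) < d v) :
    ∀ v ∈ V.erase r, ∀ w ∈ V.erase r, s(P v, v) = s(P w, w) → v = w := by
  intro v hv w hw h
  obtain ⟨hv2, hv1⟩ := Finset.mem_erase.mp hv
  obtain ⟨hw2, hw1⟩ := Finset.mem_erase.mp hw
  rw [Sym2.eq_iff] at h
  rcases h with ⟨-, h⟩ | ⟨h1, h2⟩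
  · exact h
  · exfalso
    have d1 := hd v hv1 hv2
    have d2 := hd w hw1 hw2
    rw [h1] at d1; rw [← h2] at d2; omega

theorem treeGraph_nodup {d : α → ℕ} (hd : ∀ v ∈ V, v ≠ r → d (P v) < d v) :
    ((treeGraph P V r hmem hne).edges).Nodup :=
  Multiset.Nodup.map_on (treeGraph_edge_inj hd) (V.erase r).nodup

theorem treeGraph_not_feasible {d : α → ℕ} (hd : ∀ v ∈ V, v ≠ r → d (P v) < d v)
    (hPr : P r = r) {S : Finset α} {w : α}
    (hw : w ∈ V.erase r) {sw : α} (hsw : sw ∈ S) (hdesc : ∃ k, P^[k] sw = w) :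
    ¬ ((treeGraph P V r hmem hne).delEdge s(P w, w)).Feasible r S 1 := by
  intro hfeas
  obtain ⟨hw2, hw1⟩ := Finset.mem_erase.mp hw
  have hreach := reach_of_feasible hfeas sw hsw
  have hclosed : ¬ ∃ k, P^[k] sw = w := by
    refine hreach.closed (Q := fun x => ¬ ∃ k, P^[k] x = w) ?_ ?_
    · intro x y hxy hx ⟨k, hk⟩
      have hnd := treeGraph_nodup hmem hne hd
      obtain ⟨hne', hmem'⟩ := (Multiset.Nodup.mem_erase_iff hnd).mp hxy
      obtain ⟨u, hu, huv⟩ := Multiset.mem_map.mp hmem'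
      have huw : u ≠ w := fun h => hne' (by rw [← huv, h])
      rw [Sym2.eq_iff] at huv
      rcases huv with ⟨h1, h2⟩ | ⟨h1, h2⟩
      · -- x = P u, y = u
        subst h2
        rcases k with _ | m
        · exact huw hk
        · exact hx ⟨m, by rw [← h1, ← Function.iterate_succ_apply P m u]; exact hk⟩
      · -- P u = y, u = x
        subst h1
        subst h2
        exact hx ⟨k + 1, by rw [Function.iterate_succ_apply P k u]; exact hk⟩
    · rintro ⟨k, hk⟩
      have : P^[k] r = r := Function.iterate_fixed hPr k
      exact hw2 (by rw [← hk, this])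
  exact hclosed hdesc

theorem treeGraph_deg (v : α) :
    (treeGraph P V r hmem hne).deg v
      = ((V.erase r).filter (fun u => v = P u ∨ v = u)).card := by
  classical
  rw [deg]
  show Multiset.card (Multiset.filter _ (Multiset.map _ _)) = _
  rw [← Multiset.countP_eq_card_filter, Multiset.countP_map, Finset.card_filter]
  rw [Finset.sum_boole]
  simp only [Sym2.mem_iff]
  norm_cast

end TreeGraph

end MGraph
/-- Parent function of the caterpillar tree. -/
def catP (t : ℕ) : ℕ → ℕ := fun v =>
  if v = 0 then 0
  else if v < t then t + v
  else if v = t then (if t = 1 then 0 else 2 * t - 1)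
  else if v = t + 1 then 0
  else v - 1

/-- Rank function of the caterpillar tree. -/
def catD (t : ℕ) : ℕ → ℕ := fun v => if v = 0 then 0 else if v ≤ t then v + 1 else v - t

theorem cat_exists (t : ℕ) (ht : 0 < t) :
    ∃ (G : MGraph ℕ) (r : ℕ) (S : Finset ℕ),
      r ∉ S ∧ S.card = t ∧ r ∈ G.verts ∧ ↑S ⊆ (G.verts : Set ℕ) ∧
      G.ThreeRegularInstance r S 1 ∧ G.MinimalInstance r S 1 ∧
      G.verts.card = 2 * t := by
  classical
  set V : Finset ℕ := Finset.range (2 * t) with hV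
  set S : Finset ℕ := Finset.Icc 1 t with hS
  have hmem : ∀ v ∈ V, catP t v ∈ V := by
    intro v hv
    rw [hV, Finset.mem_range] at *
    simp only [catP]
    split_ifs <;> omega
  have hne : ∀ v ∈ V, v ≠ 0 → catP t v ≠ v := by
    intro v hv hv0
    rw [hV, Finset.mem_range] at hv
    simp only [catP]
    split_ifs <;> omega
  have hd : ∀ v ∈ V, v ≠ 0 → catD t (catP t v) < catD t v := by
    intro v hv hv0
    rw [hV, Finset.mem_range] at hv
    simp only [catP, catD]
    split_ifs <;> omega
  have hPr : catP t 0 = 0 := by simp [catP]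
  set G : MGraph ℕ := MGraph.treeGraph (catP t) V 0 hmem hne with hG
  have hGverts : G.verts = V := rfl
  have hr : (0 : ℕ) ∈ V := by rw [hV, Finset.mem_range]; omega
  have hSV : ∀ s ∈ S, s ∈ V := by
    intro s hs
    rw [hS, Finset.mem_Icc] at hs
    rw [hV, Finset.mem_range]
    omega
  refine ⟨G, 0, S, ?_, ?_, hr, ?_, ?_, ?_, ?_⟩
  · rw [hS]; simp
  · rw [hS]; simp
  · intro x hx; exact hSV x hx
  · -- ThreeRegularInstance
    refine ⟨?_, ?_, ?_⟩
    · -- deg 0 = 1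
      rw [MGraph.treeGraph_deg]
      have : (V.erase 0).filter (fun u => 0 = catP t u ∨ 0 = u)
          = {if t = 1 then 1 else t + 1} := by
        ext u
        rw [Finset.mem_filter, Finset.mem_erase, hV, Finset.mem_range,
          Finset.mem_singleton]
        simp only [catP]
        split_ifs <;> omega
      rw [this, Finset.card_singleton]
    · -- terminals
      intro s hs
      rw [hS, Finset.mem_Icc] at hs
      rw [MGraph.treeGraph_deg]
      have : (V.erase 0).filter (fun u => s = catP t u ∨ s = u) = {s} := by
        ext u
        rw [Finset.mem_filter, Finset.mem_erase, hV, Finset.mem_range,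
          Finset.mem_singleton]
        simp only [catP]
        split_ifs <;> omega
      rw [this, Finset.card_singleton]
    · -- internal vertices
      intro v hv hv0 hvS
      rw [hGverts, hV, Finset.mem_range] at hv
      rw [hS, Finset.mem_Icc] at hvS
      have hvrange : t + 1 ≤ v ∧ v ≤ 2 * t - 1 := by omega
      rw [MGraph.treeGraph_deg]
      by_cases hlast : v = 2 * t - 1
      · have : (V.erase 0).filter (fun u => v = catP t u ∨ v = u) = {t, v - t, v} := by
          ext u
          rw [Finset.mem_filter, Finset.mem_erase, hV, Finset.mem_range]
          simp only [Finset.mem_insert, Finset.mem_singleton, catP]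
          split_ifs <;> omega
        rw [this]
        rw [Finset.card_insert_of_notMem (by simp; omega),
          Finset.card_insert_of_notMem (by simp; omega), Finset.card_singleton]
      · have : (V.erase 0).filter (fun u => v = catP t u ∨ v = u)
            = {v + 1, v - t, v} := by
          ext u
          rw [Finset.mem_filter, Finset.mem_erase, hV, Finset.mem_range]
          simp only [Finset.mem_insert, Finset.mem_singleton, catP]
          split_ifs <;> omega
        rw [this]
        rw [Finset.card_insert_of_notMem (by simp; omega),
          Finset.card_insert_of_notMem (by simp; omega), Finset.card_singleton]
  · -- MinimalInstance
    constructor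
    · exact MGraph.feasible_of_reach hr fun s hs =>
        MGraph.treeGraph_reach hmem hne hd s (hSV s hs)
    · intro e he
      have he' : e ∈ (V.erase 0).val.map (fun v => s(catP t v, v)) := he
      obtain ⟨w, hw, rfl⟩ := Multiset.mem_map.mp he'
      have hwF : w ∈ V.erase 0 := Finset.mem_def.mpr hw
      have hw' := hwF
      rw [Finset.mem_erase, hV, Finset.mem_range] at hw'
      by_cases hwt : w ≤ t
      · refine MGraph.treeGraph_not_feasible hmem hne hd hPr hwF (sw := w) ?_ ⟨0, rfl⟩
        rw [hS, Finset.mem_Icc]; omega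
      · refine MGraph.treeGraph_not_feasible hmem hne hd hPr hwF (sw := w - t) ?_ ⟨1, ?_⟩
        · rw [hS, Finset.mem_Icc]; omega
        · show catP t (w - t) = w
          simp only [catP]
          split_ifs <;> omega
  · rw [hGverts, hV, Finset.card_range]
/-- For every positive integer `t`, every minimal `3`-regular
instance of Steiner Rooted `1`-Orientation with `t` terminals has exactly `2t`
vertices; in particular (such instances exist and) the maximum number `N_{1,t}` of
vertices of such an instance equals `2t`. -/
theorem minimal_instance_k_one (t : ℕ) (ht : 0 < t) :
    (∀ (α : Type) [DecidableEq α] (G : MGraph α) (r : α) (S : Finset α),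
      r ∉ S → S.card = t → r ∈ G.verts → ↑S ⊆ (G.verts : Set α) →
      G.ThreeRegularInstance r S 1 → G.MinimalInstance r S 1 →
      G.verts.card = 2 * t) ∧
    (∃ (G : MGraph ℕ) (r : ℕ) (S : Finset ℕ),
      r ∉ S ∧ S.card = t ∧ r ∈ G.verts ∧ ↑S ⊆ (G.verts : Set ℕ) ∧
      G.ThreeRegularInstance r S 1 ∧ G.MinimalInstance r S 1 ∧
      G.verts.card = 2 * t) := by
  constructor
  · intro α _ G r S hrS hScard hr hS h3 hmin
    exact MGraph.card_eq_of_minimal hrS hScard hr hS h3 hmin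
  · exact cat_exists t ht
end

section
/- Let (G = (V, E), S, r) be a minimal 3-regular instance of Steiner Rooted k-Orientation with t Terminals, and let D be a feasible orientation of G. Let S' ⊆ S be nonempty, and let X ⊆ V be a tight s-cut in D for every s ∈ S'. Then X contains no directed cycle that is essential only for terminals in S'; that is, there is no directed cycle C with V(C) ⊆ X such that C is s-essential for at least one terminal s ∈ S and every terminal s ∈ S for which C is s-essential belongs to S'. -/
namespace MDigraph

variable {α : Type} [DecidableEq α]

/-- A vertex set `U` properly intersects a directed cycle (given by its vertex
sequence `c`) if both `V(c) ∩ U` and `V(c) \ U` are nonempty. -/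
def ProperlyIntersects (U : Finset α) (c : List α) : Prop :=
  (∃ x ∈ c, x ∈ U) ∧ ∃ x ∈ c, x ∉ U

/-- A directed cycle `c` is `s`-essential if some tight `s`-cut properly intersects it. -/
def IsEssential (D : MDigraph α) (r s : α) (k : ℕ) (c : List α) : Prop :=
  ∃ U : Finset α, D.IsTightCut r s k U ∧ ProperlyIntersects U c

/-- The sequence `C 0, …, C (q-1)` of directed cycles is `s`-ordered: there are tight
`s`-cuts `U i` such that `V(C i) ⊆ U j` for `i < j`, `V(C i) ∩ U j = ∅` for `i > j`,
and `U i` properly intersects `C i` for every `i`. -/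
def IsOrderedSeq (D : MDigraph α) (r s : α) (k : ℕ) {q : ℕ} (C : Fin q → List α) : Prop :=
  ∃ U : Fin q → Finset α, (∀ i, D.IsTightCut r s k (U i)) ∧
    (∀ i j : Fin q, i < j → ∀ x ∈ C i, x ∈ U j) ∧
    (∀ i j : Fin q, j < i → ∀ x ∈ C i, x ∉ U j) ∧
    ∀ i, ProperlyIntersects (U i) (C i)

end MDigraph


/-! ### Auxiliary library for the proof -/

set_option linter.unusedSectionVars false
set_option maxHeartbeats 1000000

namespace SRO
open Multiset
variable {α : Type} [DecidableEq α]

lemma zip_tail_eq (l : List α) : l.zip l.tail = l.dropLast.zip l.tail := by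
  induction l with
  | nil => rfl
  | cons a t ih =>
    cases t with
    | nil => rfl
    | cons b t' =>
      simp only [List.tail, List.dropLast] at *
      simp [List.zip_cons_cons] at ih ⊢
      exact ih

lemma map_fst_zip_tail (l : List α) : (l.zip l.tail).map Prod.fst = l.dropLast := by
  rw [zip_tail_eq]
  exact List.map_fst_zip (by simp [List.length_dropLast, List.length_tail])

lemma map_snd_zip_tail (l : List α) : (l.zip l.tail).map Prod.snd = l.tail := by
  rw [zip_tail_eq]
  exact List.map_snd_zip (by simp [List.length_dropLast, List.length_tail])

lemma pathArcs_cons (x y : α) (l : List α) (h : l.head? = some y) :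
    MDigraph.pathArcs (x :: l) = (x, y) ::ₘ MDigraph.pathArcs l := by
  cases l with
  | nil => simp at h
  | cons a t =>
    simp at h; subst h
    simp [MDigraph.pathArcs, List.zip_cons_cons]

lemma chain'_iff_pairs (R : α → α → Prop) (l : List α) :
    List.Chain' R l ↔ ∀ p ∈ l.zip l.tail, R p.1 p.2 := by
  induction l with
  | nil => simp [List.Chain']
  | cons a t ih =>
    cases t with
    | nil => simp [List.Chain']
    | cons b t' =>
      rw [show List.Chain' R (a :: b :: t') ↔ R a b ∧ List.Chain' R (b :: t') from List.isChain_cons_cons, ih]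
      rw [show (a :: b :: t').zip (a :: b :: t').tail = (a, b) :: ((b :: t').zip (b :: t').tail) from rfl]
      constructor
      · rintro ⟨h1, h2⟩ p hp
        rcases List.mem_cons.1 hp with hp | hp
        · rw [hp]; exact h1
        · exact h2 p hp
      · intro h
        exact ⟨h (a, b) List.mem_cons_self, fun p hp => h p (List.mem_cons_of_mem _ hp)⟩

lemma getLast?_cons_of_ne_nil (x : α) (l : List α) (h : l ≠ []) :
    (x :: l).getLast? = l.getLast? := by
  cases l with
  | nil => exact absurd rfl h
  | cons a t => simp [List.getLast?_cons_cons]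

lemma pathArcs_append (xs : List α) (x : α) (ys : List α) :
    MDigraph.pathArcs (xs ++ x :: ys) =
      MDigraph.pathArcs (xs ++ [x]) + MDigraph.pathArcs (x :: ys) := by
  induction xs with
  | nil => simp [MDigraph.pathArcs]
  | cons a t ih =>
    cases t with
    | nil =>
      cases ys with
      | nil => simp [MDigraph.pathArcs, List.zip_cons_cons]
      | cons b u => simp [MDigraph.pathArcs, List.zip_cons_cons]
    | cons c u =>
      have h1 : ((a :: c :: u) ++ x :: ys) = a :: ((c :: u) ++ x :: ys) := rfl
      have h2 : ((a :: c :: u) ++ [x]) = a :: ((c :: u) ++ [x]) := rfl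
      rw [h1, h2, pathArcs_cons a c _ (by simp), pathArcs_cons a c _ (by simp), ih]
      simp [Multiset.cons_add]

lemma exists_dup_split (l : List α) (h : ¬ l.Nodup) :
    ∃ (l₁ : List α) (x : α) (l₂ l₃ : List α), l = l₁ ++ x :: l₂ ++ x :: l₃ := by
  induction l with
  | nil => simp at h
  | cons a t ih =>
    by_cases ha : a ∈ t
    · obtain ⟨l₂, l₃, rfl⟩ := List.append_of_mem ha
      exact ⟨[], a, l₂, l₃, rfl⟩
    · have : ¬ t.Nodup := fun hn => h (List.nodup_cons.2 ⟨ha, hn⟩)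
      obtain ⟨l₁, x, l₂, l₃, rfl⟩ := ih this
      exact ⟨a :: l₁, x, l₂, l₃, rfl⟩

/-- Shortcutting a walk to a simple path. -/
lemma simplify_walk_aux (n : ℕ) : ∀ l : List α, l.length = n →
    ∃ p : List α, p.Nodup ∧ p.head? = l.head? ∧ p.getLast? = l.getLast? ∧
      MDigraph.pathArcs p ≤ MDigraph.pathArcs l ∧ ∀ x ∈ p, x ∈ l := by
  induction n using Nat.strong_induction_on with
  | _ n ih =>
    intro l hn
    by_cases hd : l.Nodup
    · exact ⟨l, hd, rfl, rfl, le_refl _, fun x hx => hx⟩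
    · obtain ⟨l₁, x, l₂, l₃, rfl⟩ := exists_dup_split l hd
      set l' := l₁ ++ x :: l₃ with hl'
      have hlen : l'.length < n := by
        subst hn; simp [hl']
      obtain ⟨p, hp1, hp2, hp3, hp4, hp5⟩ := ih l'.length hlen l' rfl
      refine ⟨p, hp1, ?_, ?_, ?_, ?_⟩
      · rw [hp2]
        cases l₁ with
        | nil => simp [hl']
        | cons a t => simp [hl']
      · rw [hp3, hl']
        rw [show l₁ ++ x :: l₂ ++ x :: l₃ = l₁ ++ x :: (l₂ ++ x :: l₃) by simp]
        cases l₃ with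
        | nil =>
          rw [List.getLast?_append_cons, List.getLast?_append_cons]
          rw [show x :: (l₂ ++ [x]) = (x :: l₂) ++ [x] by simp, List.getLast?_append_cons]
        | cons b u =>
          rw [List.getLast?_append_cons, List.getLast?_append_cons]
          rw [show x :: (l₂ ++ x :: b :: u) = (x :: l₂) ++ x :: b :: u by simp]
          rw [List.getLast?_append_cons]
      · refine le_trans hp4 ?_
        rw [show l₁ ++ x :: l₂ ++ x :: l₃ = l₁ ++ x :: (l₂ ++ x :: l₃) by simp]
        rw [pathArcs_append l₁ x l₃, pathArcs_append l₁ x (l₂ ++ x :: l₃)]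
        refine add_le_add (le_refl _) ?_
        rw [show x :: (l₂ ++ x :: l₃) = (x :: l₂) ++ x :: l₃ by simp]
        rw [pathArcs_append (x :: l₂) x l₃]
        exact le_add_self
      · intro y hy
        have := hp5 y hy
        simp [hl'] at this ⊢
        tauto

lemma simplify_walk (l : List α) :
    ∃ p : List α, p.Nodup ∧ p.head? = l.head? ∧ p.getLast? = l.getLast? ∧
      MDigraph.pathArcs p ≤ MDigraph.pathArcs l ∧ ∀ x ∈ p, x ∈ l :=
  simplify_walk_aux l.length l rfl

/-! ### Arc-multiset counting machinery -/

/-- Number of arcs of `M` leaving `U`. -/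
def dout (M : Multiset (α × α)) (U : Finset α) : ℕ :=
  (M.filter (fun e => e.1 ∈ U ∧ e.2 ∉ U)).card

/-- Number of arcs of `M` entering `U`. -/
def din (M : Multiset (α × α)) (U : Finset α) : ℕ :=
  (M.filter (fun e => e.1 ∉ U ∧ e.2 ∈ U)).card

/-- Net divergence of `M` at a vertex. -/
def net (M : Multiset (α × α)) (x : α) : ℤ :=
  ((M.map Prod.fst).count x : ℤ) - ((M.map Prod.snd).count x : ℤ)

lemma dout_add (M N : Multiset (α × α)) (U : Finset α) :
    dout (M + N) U = dout M U + dout N U := by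
  simp [dout, Multiset.filter_add]

lemma din_add (M N : Multiset (α × α)) (U : Finset α) :
    din (M + N) U = din M U + din N U := by
  simp [din, Multiset.filter_add]

lemma net_add (M N : Multiset (α × α)) (x : α) :
    net (M + N) x = net M x + net N x := by
  simp [net]; ring

lemma ite_swap_eq (u v : α) : (if u = v then (1:ℕ) else 0) = (if v = u then 1 else 0) := by
  rcases eq_or_ne u v with h | h
  · rw [if_pos h, if_pos h.symm]
  · rw [if_neg h, if_neg h.symm]

lemma net_cons (a : α × α) (M : Multiset (α × α)) (x : α) :
    net (a ::ₘ M) x = net M x + (if a.1 = x then 1 else 0) - (if a.2 = x then 1 else 0) := by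
  unfold net
  rw [Multiset.map_cons, Multiset.map_cons, Multiset.count_cons, Multiset.count_cons,
    ite_swap_eq x a.1, ite_swap_eq x a.2]
  split_ifs <;> push_cast <;> ring

lemma map_sub_of_le {β : Type} [DecidableEq β] (f : α × α → β) {M N : Multiset (α × α)}
    (h : N ≤ M) : (M - N).map f = M.map f - N.map f := by
  have h2 : N.map f ≤ M.map f := Multiset.map_le_map h
  have : (M - N).map f + N.map f = M.map f - N.map f + N.map f := by
    rw [← Multiset.map_add, tsub_add_cancel_of_le h, tsub_add_cancel_of_le h2]
  exact add_right_cancel this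

lemma net_sub {M N : Multiset (α × α)} (h : N ≤ M) (x : α) :
    net (M - N) x = net M x - net N x := by
  have h1 : Multiset.count x ((M - N).map Prod.fst) =
      Multiset.count x (M.map Prod.fst) - Multiset.count x (N.map Prod.fst) := by
    rw [map_sub_of_le _ h, Multiset.count_sub]
  have h2 : Multiset.count x ((M - N).map Prod.snd) =
      Multiset.count x (M.map Prod.snd) - Multiset.count x (N.map Prod.snd) := by
    rw [map_sub_of_le _ h, Multiset.count_sub]
  have c1 : Multiset.count x (N.map Prod.fst) ≤ Multiset.count x (M.map Prod.fst) :=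
    Multiset.count_le_of_le _ (Multiset.map_le_map h)
  have c2 : Multiset.count x (N.map Prod.snd) ≤ Multiset.count x (M.map Prod.snd) :=
    Multiset.count_le_of_le _ (Multiset.map_le_map h)
  unfold net
  rw [h1, h2, Nat.cast_sub c1, Nat.cast_sub c2]
  ring

lemma dout_sub {M N : Multiset (α × α)} (h : N ≤ M) (U : Finset α) :
    dout (M - N) U = dout M U - dout N U := by
  unfold dout
  rw [Multiset.filter_sub, Multiset.card_sub (Multiset.filter_le_filter _ h)]

/-- divergence of a walk's arc multiset. -/
lemma net_pathArcs (l : List α) (x : α) :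
    net (MDigraph.pathArcs l) x =
      (if l.head? = some x then 1 else 0) - (if l.getLast? = some x then 1 else 0) := by
  induction l with
  | nil => simp [net, MDigraph.pathArcs]
  | cons a t ih =>
    cases t with
    | nil => simp [net, MDigraph.pathArcs]
    | cons b u =>
      rw [pathArcs_cons a b _ (by simp), net_cons, ih,
        getLast?_cons_of_ne_nil a (b :: u) (by simp)]
      simp only [List.head?_cons, Option.some.injEq]
      split_ifs <;> omega

lemma dout_cons (a : α × α) (M : Multiset (α × α)) (U : Finset α) :
    dout (a ::ₘ M) U = dout M U + (if a.1 ∈ U ∧ a.2 ∉ U then 1 else 0) := by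
  unfold dout; rw [Multiset.filter_cons]
  split_ifs <;> simp

lemma din_cons (a : α × α) (M : Multiset (α × α)) (U : Finset α) :
    din (a ::ₘ M) U = din M U + (if a.1 ∉ U ∧ a.2 ∈ U then 1 else 0) := by
  unfold din; rw [Multiset.filter_cons]
  split_ifs <;> simp

lemma net_sum_cut (M : Multiset (α × α)) (U : Finset α) :
    ∑ x ∈ U, net M x = (dout M U : ℤ) - (din M U : ℤ) := by
  induction M using Multiset.induction_on with
  | empty => simp [net, dout, din]
  | cons a M ih =>
    have hsum : ∑ x ∈ U, net (a ::ₘ M) x =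
        (∑ x ∈ U, net M x) + ((if a.1 ∈ U then (1:ℤ) else 0) - (if a.2 ∈ U then (1:ℤ) else 0)) := by
      simp only [net_cons]
      rw [show (fun x => net M x + (if a.1 = x then (1:ℤ) else 0) - (if a.2 = x then 1 else 0)) = (fun x => net M x + ((if a.1 = x then (1:ℤ) else 0) - (if a.2 = x then 1 else 0))) from funext (fun x => by ring)]
      rw [Finset.sum_add_distrib, Finset.sum_sub_distrib, Finset.sum_ite_eq, Finset.sum_ite_eq]
    rw [hsum, ih, dout_cons, din_cons]
    push_cast
    split_ifs <;> (try omega) <;> (try tauto)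

lemma dout_sum {ι : Type} (s : Finset ι) (f : ι → Multiset (α × α)) (U : Finset α) :
    dout (∑ i ∈ s, f i) U = ∑ i ∈ s, dout (f i) U := by
  induction s using Finset.cons_induction with
  | empty => simp [dout]
  | cons a s ha ih => rw [Finset.sum_cons, Finset.sum_cons, dout_add, ih]

lemma dout_mono {M N : Multiset (α × α)} (h : M ≤ N) (U : Finset α) :
    dout M U ≤ dout N U :=
  Multiset.card_le_card (Multiset.filter_le_filter _ h)

lemma exists_crossing_pair (U : Finset α) :
    ∀ (l : List α) (u v : α), l.head? = some u → l.getLast? = some v → u ∈ U → v ∉ U →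
    ∃ q ∈ MDigraph.pathArcs l, q.1 ∈ U ∧ q.2 ∉ U := by
  intro l
  induction l with
  | nil => intro u v hh; simp at hh
  | cons a t ih =>
    intro u v hh hl hu hv
    have ha : a = u := by simpa using hh
    cases t with
    | nil =>
      have hav : a = v := by simpa using hl
      have huv : u = v := by rw [← ha]; exact hav
      exact absurd (huv ▸ hu) hv
    | cons b w =>
      by_cases hb : b ∈ U
      · obtain ⟨q, hq1, hq2⟩ := ih b v rfl
          (by rw [← getLast?_cons_of_ne_nil a (b :: w) (by simp)]; exact hl) hb hv
        refine ⟨q, ?_, hq2⟩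
        rw [pathArcs_cons a b (b :: w) rfl]
        exact Multiset.mem_cons_of_mem hq1
      · refine ⟨(a, b), ?_, by rw [ha]; exact hu, hb⟩
        rw [pathArcs_cons a b (b :: w) rfl]
        exact Multiset.mem_cons_self _ _

lemma mem_fst_or_snd {l : List α} (hlen : 2 ≤ l.length) {x : α} (hx : x ∈ l) :
    (∃ q ∈ MDigraph.pathArcs l, q.1 = x) ∨ (∃ q ∈ MDigraph.pathArcs l, q.2 = x) := by
  have hne : l ≠ [] := by intro h; subst h; simp at hlen
  by_cases hd : x ∈ l.dropLast
  · left
    rw [← map_fst_zip_tail] at hd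
    obtain ⟨q, hq, hq2⟩ := List.mem_map.1 hd
    exact ⟨q, Multiset.mem_coe.2 hq, hq2⟩
  · right
    have hx2 : x ∈ l.dropLast ++ [l.getLast hne] := by
      rw [List.dropLast_append_getLast hne]; exact hx
    have hxl : x = l.getLast hne := by
      rcases List.mem_append.1 hx2 with h | h
      · exact absurd h hd
      · simpa using h
    have : x ∈ l.tail := by
      cases l with
      | nil => exact absurd rfl hne
      | cons a t =>
        cases t with
        | nil => simp at hlen
        | cons b w =>
          rw [hxl]
          rw [List.getLast_cons (by simp)]
          exact List.getLast_mem _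
    rw [← map_snd_zip_tail] at this
    obtain ⟨q, hq, hq2⟩ := List.mem_map.1 this
    exact ⟨q, Multiset.mem_coe.2 hq, hq2⟩

/-- Easy direction: `k` arc-disjoint paths force every cut to have `≥ k` leaving arcs. -/
lemma cut_lb {D : MDigraph α} {r s₁ : α} {k : ℕ} (h : D.HasArcDisjointPaths r s₁ k)
    {U : Finset α} (hr : r ∈ U) (hs : s₁ ∉ U) : k ≤ dout D.arcs U := by
  obtain ⟨P, hP, hle⟩ := h
  have h1 : ∀ i, 1 ≤ dout (MDigraph.pathArcs (P i)) U := by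
    intro i
    obtain ⟨q, hq, hq2⟩ := exists_crossing_pair U (P i) r s₁ (hP i).2.1 (hP i).2.2.1 hr hs
    have : q ∈ (MDigraph.pathArcs (P i)).filter (fun e => e.1 ∈ U ∧ e.2 ∉ U) :=
      Multiset.mem_filter.2 ⟨hq, hq2⟩
    exact Multiset.card_pos_iff_exists_mem.2 ⟨q, this⟩
  calc k = ∑ _i : Fin k, 1 := by simp
    _ ≤ ∑ i : Fin k, dout (MDigraph.pathArcs (P i)) U := Finset.sum_le_sum (fun i _ => h1 i)
    _ = dout (∑ i : Fin k, MDigraph.pathArcs (P i)) U := (dout_sum _ _ _).symm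
    _ ≤ dout D.arcs U := dout_mono hle U

/-! ### Menger machinery -/

lemma net_map_swap (M : Multiset (α × α)) (x : α) :
    net (M.map Prod.swap) x = - net M x := by
  have h1 : (M.map Prod.swap).map Prod.fst = M.map Prod.snd := by
    rw [Multiset.map_map]; exact Multiset.map_congr rfl (fun p _ => rfl)
  have h2 : (M.map Prod.swap).map Prod.snd = M.map Prod.fst := by
    rw [Multiset.map_map]; exact Multiset.map_congr rfl (fun p _ => rfl)
  unfold net
  rw [h1, h2]; ring

lemma nodup_pathArcs {l : List α} (h : l.Nodup) : (MDigraph.pathArcs l).Nodup := by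
  have : ((l.zip l.tail : List (α × α)) : Multiset (α × α)).Nodup := by
    rw [Multiset.coe_nodup]
    exact List.Nodup.of_map Prod.fst (by rw [map_fst_zip_tail]; exact h.sublist (List.dropLast_sublist l))
  exact this

/-- Augmenting step. -/
lemma augment (A F : Multiset (α × α)) (hF : F ≤ A) (l : List α) (hnd : l.Nodup)
    (hch : ∀ p ∈ MDigraph.pathArcs l, (p ∈ A - F) ∨ (Prod.swap p ∈ F)) :
    ∃ F', F' ≤ A ∧ ∀ x, net F' x = net F x + net (MDigraph.pathArcs l) x := by
  classical
  set Lp := MDigraph.pathArcs l with hLp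
  have hndLp : Lp.Nodup := nodup_pathArcs hnd
  set fwd := Lp.filter (fun p => p ∈ A - F) with hfwd
  set bwdPre := Lp.filter (fun p => ¬ p ∈ A - F) with hbwdPre
  set bwd := bwdPre.map Prod.swap with hbwd
  have hsplit : fwd + bwdPre = Lp := Multiset.filter_add_not _ _
  have hndf : fwd.Nodup := hndLp.filter _
  have hndb : bwd.Nodup := (hndLp.filter _).map Prod.swap_injective
  have hbwdF : bwd ≤ F := by
    rw [Multiset.le_iff_count]
    intro b
    by_cases hb : b ∈ bwd
    · have h1 : Multiset.count b bwd ≤ 1 := (Multiset.nodup_iff_count_le_one.1 hndb) b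
      obtain ⟨p, hp, hps⟩ := Multiset.mem_map.1 hb
      have hpLp : p ∈ Lp := Multiset.mem_of_mem_filter hp
      have hpn : ¬ p ∈ A - F := (Multiset.mem_filter.1 hp).2
      have : Prod.swap p ∈ F := (hch p hpLp).resolve_left hpn
      have : b ∈ F := hps ▸ this
      have h2 : 1 ≤ Multiset.count b F := Multiset.one_le_count_iff_mem.2 this
      omega
    · simp [Multiset.count_eq_zero_of_notMem hb]
  have hble : bwd ≤ F + fwd := le_trans hbwdF (le_add_right _ _)
  refine ⟨(F + fwd) - bwd, ?_, ?_⟩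
  · rw [Multiset.le_iff_count]
    intro b
    rw [Multiset.count_sub, Multiset.count_add]
    by_cases hb : b ∈ fwd
    · have h1 : Multiset.count b fwd ≤ 1 := (Multiset.nodup_iff_count_le_one.1 hndf) b
      have h2 : b ∈ A - F := (Multiset.mem_filter.1 (by exact hb)).2
      have h3 : 1 ≤ Multiset.count b (A - F) := Multiset.one_le_count_iff_mem.2 h2
      rw [Multiset.count_sub] at h3
      have h4 : Multiset.count b F ≤ Multiset.count b A := Multiset.count_le_of_le b hF
      omega
    · have h1 : Multiset.count b fwd = 0 := Multiset.count_eq_zero_of_notMem hb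
      have h4 : Multiset.count b F ≤ Multiset.count b A := Multiset.count_le_of_le b hF
      omega
  · intro x
    rw [net_sub hble, net_add]
    have key : net fwd x - net bwd x = net Lp x := by
      have h1 : net bwd x = - net bwdPre x := by
        rw [hbwd, net_map_swap]
      rw [h1]
      have : net fwd x + net bwdPre x = net Lp x := by
        rw [← net_add, hsplit]
      linarith
    linarith

/-- Extract a chain list from reflexive-transitive closure. -/
lemma rtg_to_list {R : α → α → Prop} {a b : α} (h : Relation.ReflTransGen R a b) :
    ∃ l : List α, l.head? = some a ∧ l.getLast? = some b ∧ List.Chain' R l := by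
  induction h with
  | refl => exact ⟨[a], rfl, rfl, List.isChain_singleton a⟩
  | tail _ hbc ih =>
    obtain ⟨l, hh, hl, hc⟩ := ih
    rename_i b' c' _
    have hne : l ≠ [] := by intro h0; rw [h0] at hh; simp at hh
    refine ⟨l ++ [c'], ?_, ?_, ?_⟩
    · cases l with
      | nil => exact absurd rfl hne
      | cons u t => simpa using hh
    · simp [List.getLast?_concat]
    · rw [show List.Chain' R (l ++ [c']) ↔ _ from List.isChain_append]
      refine ⟨hc, List.isChain_singleton _, ?_⟩
      intro x hx y hy
      simp at hy
      subst hy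
      rw [hl] at hx
      simp at hx
      subst hx
      exact hbc

/-- Flows of every value up to the min cut exist. -/
lemma flow_exists (A : Multiset (α × α)) (r s : α) (hrs : r ≠ s) (k : ℕ)
    (Vsup : Finset α) (hVr : r ∈ Vsup) (hVsup : ∀ b ∈ A, b.1 ∈ Vsup ∧ b.2 ∈ Vsup)
    (hcut : ∀ U : Finset α, r ∈ U → s ∉ U → k ≤ dout A U) :
    ∃ F, F ≤ A ∧ (∀ x, x ≠ r → x ≠ s → net F x = 0) ∧ net F r = k := by
  classical
  suffices h : ∀ j : ℕ, j ≤ k → ∃ F, F ≤ A ∧ (∀ x, x ≠ r → x ≠ s → net F x = 0) ∧ net F r = j by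
    exact h k le_rfl
  intro j
  induction j with
  | zero => exact fun _ => ⟨0, Multiset.zero_le A, fun x _ _ => by simp [net], by simp [net]⟩
  | succ j ih =>
    intro hjk
    obtain ⟨F, hFA, hFcons, hFval⟩ := ih (le_of_lt hjk)
    set Rstep : α → α → Prop := fun y z => ((y, z) ∈ A - F) ∨ ((z, y) ∈ F) with hRstep
    by_cases hreach : Relation.ReflTransGen Rstep r s
    · -- augment
      obtain ⟨l₀, hh₀, hl₀, hc₀⟩ := rtg_to_list hreach
      obtain ⟨p, hpnd, hph, hpl, hple, _⟩ := simplify_walk l₀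
      rw [hh₀] at hph; rw [hl₀] at hpl
      have hchp : ∀ q ∈ MDigraph.pathArcs p, (q ∈ A - F) ∨ (Prod.swap q ∈ F) := by
        intro q hq
        have hq2 : q ∈ MDigraph.pathArcs l₀ := Multiset.mem_of_le hple hq
        have := (chain'_iff_pairs Rstep l₀).1 hc₀ q (Multiset.mem_coe.1 hq2)
        exact this
      obtain ⟨F', hF'A, hF'net⟩ := augment A F hFA p hpnd hchp
      refine ⟨F', hF'A, ?_, ?_⟩
      · intro x hxr hxs
        rw [hF'net, hFcons x hxr hxs, net_pathArcs, hph, hpl]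
        simp [Option.some_inj, Ne.symm hxr, Ne.symm hxs]
      · rw [hF'net, hFval, net_pathArcs, hph, hpl]
        rw [if_pos rfl, if_neg (by simp [Ne.symm hrs])]
        push_cast
        ring
    · -- no augmenting path: cut contradiction
      exfalso
      set U : Finset α := Vsup.filter (fun x => Relation.ReflTransGen Rstep r x) with hU
      have hrU : r ∈ U := Finset.mem_filter.2 ⟨hVr, Relation.ReflTransGen.refl⟩
      have hsU : s ∉ U := fun hs => hreach (Finset.mem_filter.1 hs).2
      have hstep : ∀ x ∈ U, ∀ y, Rstep x y → y ∈ Vsup → y ∈ U := by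
        intro x hx y hxy hyV
        exact Finset.mem_filter.2 ⟨hyV, Relation.ReflTransGen.tail (Finset.mem_filter.1 hx).2 hxy⟩
      have hdoutAF : dout (A - F) U = 0 := by
        by_contra h0
        obtain ⟨b, hb⟩ := Multiset.card_pos_iff_exists_mem.1 (Nat.pos_of_ne_zero h0)
        rw [Multiset.mem_filter] at hb
        obtain ⟨hb1, hb2, hb3⟩ := hb
        have hbA : b ∈ A := Multiset.mem_of_le (tsub_le_self) hb1
        have : b.2 ∈ U := hstep b.1 hb2 b.2 (Or.inl (by rwa [show (b.1, b.2) = b from rfl])) (hVsup b hbA).2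
        exact hb3 this
      have hdinF : din F U = 0 := by
        by_contra h0
        obtain ⟨b, hb⟩ := Multiset.card_pos_iff_exists_mem.1 (Nat.pos_of_ne_zero h0)
        rw [Multiset.mem_filter] at hb
        obtain ⟨hb1, hb2, hb3⟩ := hb
        have hbA : b ∈ A := Multiset.mem_of_le hFA hb1
        have : b.1 ∈ U := hstep b.2 hb3 b.1 (Or.inr (by rw [show (b.1, b.2) = b from rfl]; exact hb1)) (hVsup b hbA).1
        exact hb2 this
      have hsum : ∑ x ∈ U, net F x = (j : ℤ) := by
        rw [Finset.sum_eq_single r]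
        · exact hFval
        · intro x hxU hxr
          exact hFcons x hxr (fun hxs => hsU (hxs ▸ hxU))
        · intro h; exact absurd hrU h
      have hcutU : ∑ x ∈ U, net F x = (dout F U : ℤ) - (din F U : ℤ) := net_sum_cut F U
      have hA : dout A U = dout F U + dout (A - F) U := by
        rw [← dout_add, add_tsub_cancel_of_le hFA]
      have hk := hcut U hrU hsU
      rw [hdinF] at hcutU
      rw [hdoutAF] at hA
      omega

/-- Path extraction from a positive-divergence flow. -/
lemma ext1 (A : Multiset (α × α)) (hloopA : ∀ b ∈ A, b.1 ≠ b.2) (s : α) :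
    ∀ (n : ℕ) (F : Multiset (α × α)), F.card = n → F ≤ A →
    ∀ x, x ≠ s → 1 ≤ net F x → (∀ z, z ≠ x → z ≠ s → 0 ≤ net F z) →
    ∃ l : List α, l.head? = some x ∧ l.getLast? = some s ∧ 2 ≤ l.length ∧
      MDigraph.pathArcs l ≤ F := by
  intro n
  induction n using Nat.strong_induction_on with
  | _ n ihn =>
    intro F hcard hFA x hxs hx hinv
    have hpos : 0 < Multiset.count x (F.map Prod.fst) := by
      simp only [net] at hx
      omega
    obtain ⟨b, hbF, hbx⟩ := Multiset.mem_map.1 (Multiset.count_pos.1 hpos)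
    have hxy : b.1 ≠ b.2 := hloopA b (Multiset.mem_of_le hFA hbF)
    by_cases hys : b.2 = s
    · refine ⟨[x, s], rfl, rfl, by simp, ?_⟩
      have : MDigraph.pathArcs [x, s] = {(x, s)} := by
        rw [pathArcs_cons x s [s] rfl]
        rfl
      rw [this, Multiset.singleton_le]
      have : b = (x, s) := Prod.ext hbx hys
      exact this ▸ hbF
    · set F' := F.erase b with hF'
      have hFeq : F = b ::ₘ F' := (Multiset.cons_erase hbF).symm
      have hcard' : F'.card < n := by
        have h1 : F'.card + 1 = F.card := by rw [hF']; exact Multiset.card_erase_add_one hbF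
        omega
      have hnet : ∀ z, net F z = net F' z + (if b.1 = z then 1 else 0) - (if b.2 = z then 1 else 0) := by
        intro z
        rw [hFeq] at *
        exact net_cons b F' z
      have hyx : b.2 ≠ x := by
        intro h
        exact hxy (hbx.trans h.symm)
      have hy1 : 1 ≤ net F' b.2 := by
        have h0 : 0 ≤ net F b.2 := hinv b.2 hyx hys
        have := hnet b.2
        rw [if_neg (hbx ▸ hyx ∘ Eq.symm), if_pos rfl] at this
        omega
      have hinv' : ∀ z, z ≠ b.2 → z ≠ s → 0 ≤ net F' z := by
        intro z hzy hzs
        have := hnet z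
        by_cases hzx : z = x
        · subst hzx
          rw [if_pos hbx] at this
          have h1 : (if b.2 = z then (1:ℤ) else 0) = 0 := if_neg (fun h => hzy h.symm)
          rw [h1] at this
          omega
        · have h2 : (if b.1 = z then (1:ℤ) else 0) = 0 := if_neg (fun h => hzx ((hbx.symm.trans h).symm ▸ rfl))
          have h1 : (if b.2 = z then (1:ℤ) else 0) = 0 := if_neg (fun h => hzy h.symm)
          rw [h1, h2] at this
          have h0 : 0 ≤ net F z := hinv z (fun h => hzx h) hzs
          omega
      obtain ⟨l', hh', hl', hlen', hle'⟩ :=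
        ihn F'.card hcard' F' rfl (le_trans (Multiset.erase_le b F) hFA) b.2 hys hy1 hinv'
      have hl'ne : l' ≠ [] := by
        intro h0; rw [h0] at hh'; simp at hh'
      refine ⟨x :: l', rfl, ?_, ?_, ?_⟩
      · rw [getLast?_cons_of_ne_nil x l' hl'ne]; exact hl'
      · simp
        have := List.length_pos_iff.2 hl'ne
        omega
      · rw [pathArcs_cons x b.2 l' hh']
        have hb : (x, b.2) = b := Prod.ext hbx.symm rfl
        rw [hb, hFeq]
        exact Multiset.cons_le_cons b hle'

/-- Flow decomposition into `k` walks. -/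
lemma decomp (A : Multiset (α × α)) (hloopA : ∀ b ∈ A, b.1 ≠ b.2) (r s : α) (hrs : r ≠ s) :
    ∀ (k : ℕ) (F : Multiset (α × α)), F ≤ A → (∀ x, x ≠ r → x ≠ s → net F x = 0) →
    net F r = k →
    ∃ W : Fin k → List α,
      (∀ i, (W i).head? = some r ∧ (W i).getLast? = some s ∧ 2 ≤ (W i).length) ∧
      (∑ i, MDigraph.pathArcs (W i)) ≤ F := by
  intro k
  induction k with
  | zero =>
    intro F _ _ _
    exact ⟨fun i => [], fun i => i.elim0, by simp⟩
  | succ k ih =>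
    intro F hFA hcons hval
    obtain ⟨l, hh, hl, hlen, hle⟩ := ext1 A hloopA s F.card F rfl hFA r hrs
      (by rw [hval]; push_cast; omega)
      (by intro z hzr hzs; rw [hcons z hzr hzs])
    set F' := F - MDigraph.pathArcs l with hF'
    have hPF : MDigraph.pathArcs l ≤ F := hle
    have hcons' : ∀ x, x ≠ r → x ≠ s → net F' x = 0 := by
      intro x hxr hxs
      rw [hF', net_sub hPF, hcons x hxr hxs, net_pathArcs, hh, hl]
      simp [Ne.symm hxr, Ne.symm hxs]
    have hval' : net F' r = k := by
      rw [hF', net_sub hPF, hval, net_pathArcs, hh, hl]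
      rw [if_pos rfl, if_neg (by simp [Ne.symm hrs])]
      push_cast; ring
    obtain ⟨W', hW'1, hW'2⟩ := ih F' (le_trans tsub_le_self hFA) hcons' hval'
    refine ⟨Fin.cons l W', ?_, ?_⟩
    · intro i
      refine Fin.cases ?_ ?_ i
      · exact ⟨hh, hl, hlen⟩
      · intro j; simpa using hW'1 j
    · rw [Fin.sum_univ_succ]
      simp only [Fin.cons_zero, Fin.cons_succ]
      calc MDigraph.pathArcs l + ∑ i, MDigraph.pathArcs (W' i)
          ≤ MDigraph.pathArcs l + F' := add_le_add (le_refl _) hW'2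
        _ = F := by rw [hF', add_tsub_cancel_of_le hPF]

/-- Menger's theorem (arc version, multigraphs): cut condition implies
`k` arc-disjoint directed paths. -/
theorem menger (D : MDigraph α) (r s : α) (hr : r ∈ D.verts) (hrs : r ≠ s) (k : ℕ)
    (hcut : ∀ U : Finset α, r ∈ U → s ∉ U → k ≤ dout D.arcs U) :
    D.HasArcDisjointPaths r s k := by
  classical
  have hloopA : ∀ b ∈ D.arcs, b.1 ≠ b.2 := D.loopless
  obtain ⟨F, hFA, hFcons, hFval⟩ := flow_exists D.arcs r s hrs k D.verts hr
    (fun b hb => ⟨D.tail_mem b hb, D.head_mem b hb⟩) hcut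
  obtain ⟨W, hW1, hW2⟩ := decomp D.arcs hloopA r s hrs k F hFA hFcons hFval
  -- simplify each walk
  have hsim : ∀ i : Fin k, ∃ p : List α, p.Nodup ∧ p.head? = some r ∧ p.getLast? = some s ∧
      MDigraph.pathArcs p ≤ MDigraph.pathArcs (W i) ∧ ∀ x ∈ p, x ∈ W i := by
    intro i
    obtain ⟨p, h1, h2, h3, h4, h5⟩ := simplify_walk (W i)
    exact ⟨p, h1, h2.trans (hW1 i).1, h3.trans (hW1 i).2.1, h4, h5⟩
  choose P hP1 hP2 hP3 hP4 hP5 using hsim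
  have hPlen : ∀ i, 2 ≤ (P i).length := by
    intro i
    have h2 := hP2 i
    have h3 := hP3 i
    rcases hp : P i with _ | ⟨a, _ | ⟨b, t⟩⟩
    · rw [hp] at h2; simp at h2
    · rw [hp] at h2 h3
      simp at h2 h3
      exact absurd (h2.symm.trans h3) hrs
    · simp
  have harcsD : ∀ i, MDigraph.pathArcs (P i) ≤ D.arcs := by
    intro i
    refine le_trans (hP4 i) (le_trans ?_ (le_trans hW2 hFA))
    exact Finset.single_le_sum (f := fun j => MDigraph.pathArcs (W j))
      (fun j _ => Multiset.zero_le _) (Finset.mem_univ i)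
  refine ⟨P, ?_, ?_⟩
  · intro i
    refine ⟨hP1 i, hP2 i, hP3 i, ?_, ?_⟩
    · intro x hx
      rcases mem_fst_or_snd (hPlen i) hx with ⟨q, hq, hqx⟩ | ⟨q, hq, hqx⟩
      · exact hqx ▸ D.tail_mem q (Multiset.mem_of_le (harcsD i) hq)
      · exact hqx ▸ D.head_mem q (Multiset.mem_of_le (harcsD i) hq)
    · rw [chain'_iff_pairs]
      intro p hp
      exact Multiset.mem_of_le (harcsD i) (Multiset.mem_coe.2 hp)
  · calc (∑ i, MDigraph.pathArcs (P i)) ≤ ∑ i, MDigraph.pathArcs (W i) :=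
        Finset.sum_le_sum (fun i _ => hP4 i)
      _ ≤ F := hW2
      _ ≤ D.arcs := hFA

/-! ### Submodularity and cycle balance -/

/-- Arcs from `A \ B` to `B \ A`. -/
def cross (M : Multiset (α × α)) (A B : Finset α) : ℕ :=
  (M.filter (fun e => (e.1 ∈ A ∧ e.1 ∉ B) ∧ (e.2 ∈ B ∧ e.2 ∉ A))).card

lemma cross_cons (a : α × α) (M : Multiset (α × α)) (A B : Finset α) :
    cross (a ::ₘ M) A B = cross M A B +
      (if (a.1 ∈ A ∧ a.1 ∉ B) ∧ (a.2 ∈ B ∧ a.2 ∉ A) then 1 else 0) := by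
  unfold cross; rw [Multiset.filter_cons]
  split_ifs <;> simp

lemma submod (M : Multiset (α × α)) (A B : Finset α) :
    dout M (A ∩ B) + dout M (A ∪ B) + cross M A B + cross M B A
      = dout M A + dout M B := by
  induction M using Multiset.induction_on with
  | empty => simp [dout, cross]
  | cons a M ih =>
    rw [dout_cons, dout_cons, dout_cons, dout_cons, cross_cons, cross_cons]
    by_cases h1 : a.1 ∈ A <;> by_cases h2 : a.1 ∈ B <;>
      by_cases h3 : a.2 ∈ A <;> by_cases h4 : a.2 ∈ B <;>
      simp [Finset.mem_inter, Finset.mem_union, h1, h2, h3, h4] <;> omega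

lemma cycle_net (c : List α) (x : α) : net (MDigraph.cycleArcs c) x = 0 := by
  have hfst : (MDigraph.cycleArcs c).map Prod.fst = (c : Multiset α) := by
    show ((c.zip (c.rotate 1) : List (α × α)) : Multiset (α × α)).map Prod.fst = _
    rw [Multiset.map_coe, List.map_fst_zip (by simp [List.length_rotate])]
  have hsnd : (MDigraph.cycleArcs c).map Prod.snd = (c.rotate 1 : Multiset α) := by
    show ((c.zip (c.rotate 1) : List (α × α)) : Multiset (α × α)).map Prod.snd = _
    rw [Multiset.map_coe, List.map_snd_zip (by simp [List.length_rotate])]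
  unfold net
  rw [hfst, hsnd, Multiset.coe_count, Multiset.coe_count,
    (List.rotate_perm c 1).count_eq]
  ring

lemma cycle_balance (c : List α) (U : Finset α) :
    dout (MDigraph.cycleArcs c) U = din (MDigraph.cycleArcs c) U := by
  have h := net_sum_cut (MDigraph.cycleArcs c) U
  rw [Finset.sum_congr rfl (fun x _ => cycle_net c x)] at h
  simp at h
  omega

lemma dout_swap (M : Multiset (α × α)) (U : Finset α) :
    dout (M.map Prod.swap) U = din M U := by
  unfold dout din
  rw [← Multiset.countP_eq_card_filter, ← Multiset.countP_eq_card_filter,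
    Multiset.countP_map]
  rw [← Multiset.countP_eq_card_filter]
  exact Multiset.countP_congr rfl (fun e _ => by
    show (e.2 ∈ U ∧ e.1 ∉ U) = (e.1 ∉ U ∧ e.2 ∈ U)
    rw [and_comm])

lemma map_erase_mem {β : Type} [DecidableEq β] (f : α × α → β) {M : Multiset (α × α)}
    {b : α × α} (hb : b ∈ M) : (M.erase b).map f = (M.map f).erase (f b) := by
  have h1 : f b ::ₘ (M.erase b).map f = f b ::ₘ (M.map f).erase (f b) := by
    rw [← Multiset.map_cons, Multiset.cons_erase hb,
      Multiset.cons_erase (Multiset.mem_map_of_mem f hb)]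
  exact (Multiset.cons_inj_right _).1 h1

/-- The key cut formula for the modified orientation. -/
lemma dout_mod (A K : Multiset (α × α)) (hK : K ≤ A) (a : α × α) (ha : a ∈ K)
    (hbal : ∀ U : Finset α, dout K U = din K U) (U : Finset α) :
    dout ((A - K) + (K.erase a).map Prod.swap) U
      + (if a.1 ∉ U ∧ a.2 ∈ U then 1 else 0) = dout A U := by
  rw [dout_add, dout_swap]
  have h1 : din (K.erase a) U + (if a.1 ∉ U ∧ a.2 ∈ U then 1 else 0) = din K U := by
    conv_rhs => rw [← Multiset.cons_erase ha]
    rw [din_cons]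
  have h2 : dout (A - K) U + dout K U = dout A U := by
    rw [← dout_add, tsub_add_cancel_of_le hK]
  have h3 := hbal U
  omega

/-! ### Existence of a good arc on the cycle -/

lemma sum_lt_sum_pointwise {β : Type} (f g : β → ℕ) :
    ∀ l : List β, l ≠ [] → (∀ q ∈ l, f q < g q) →
    (l.map f).sum < (l.map g).sum := by
  intro l
  induction l with
  | nil => exact fun h => absurd rfl h
  | cons a t ih =>
    intro _ h
    cases t with
    | nil => simpa using h a (by simp)
    | cons b u =>
      simp only [List.map_cons, List.sum_cons]
      have h1 := h a (by simp)
      have h2 := ih (by simp) (fun q hq => h q (List.mem_cons_of_mem _ hq))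
      simp only [List.map_cons, List.sum_cons] at h2
      omega

lemma exists_good_arc (c : List α) (hc2 : 2 ≤ c.length) (P : Finset α → Prop)
    (hnc : ∀ W₁ W₂, P W₁ → P W₂ → ∀ q ∈ c.zip (c.rotate 1),
      ¬(q.1 ∈ W₁ ∧ q.1 ∉ W₂ ∧ q.2 ∈ W₂ ∧ q.2 ∉ W₁)) :
    ∃ q ∈ c.zip (c.rotate 1), ∀ W, P W → ¬(q.1 ∉ W ∧ q.2 ∈ W) := by
  classical
  by_contra hcon
  push_neg at hcon
  set L := c.zip (c.rotate 1) with hLdef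
  have hLlen : L.length = c.length := by
    rw [hLdef, List.length_zip, List.length_rotate, min_self]
  have hLne : L ≠ [] := by
    intro h0
    rw [h0] at hLlen
    simp at hLlen
    omega
  have hch : ∀ q : α × α, ∃ W, q ∈ L → (P W ∧ q.1 ∉ W ∧ q.2 ∈ W) := by
    intro q
    by_cases hq : q ∈ L
    · obtain ⟨W, hW1, hW2⟩ := hcon q hq
      exact ⟨W, fun _ => ⟨hW1, hW2⟩⟩
    · exact ⟨∅, fun h => absurd h hq⟩
  choose W hW using hch
  set ρ : α → ℕ := fun x => ((L.toFinset).filter (fun q => x ∈ W q)).card with hρ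
  have hmono : ∀ q ∈ L, ρ q.1 < ρ q.2 := by
    intro q hq
    apply Finset.card_lt_card
    have hsub1 : (L.toFinset).filter (fun q' => q.1 ∈ W q') ⊆
        (L.toFinset).filter (fun q' => q.2 ∈ W q') := by
      intro q' hq'
      obtain ⟨hq'L, hq'1⟩ := Finset.mem_filter.1 hq'
      refine Finset.mem_filter.2 ⟨hq'L, ?_⟩
      by_contra h2
      exact hnc (W q') (W q) (hW q' (List.mem_toFinset.1 hq'L)).1 (hW q hq).1 q hq
        ⟨hq'1, (hW q hq).2.1, (hW q hq).2.2, h2⟩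
    rw [Finset.ssubset_iff_of_subset hsub1]
    refine ⟨q, Finset.mem_filter.2 ⟨List.mem_toFinset.2 hq, (hW q hq).2.2⟩, ?_⟩
    intro hmem
    exact (hW q hq).2.1 (Finset.mem_filter.1 hmem).2
  have hsum := sum_lt_sum_pointwise (fun q => ρ q.1) (fun q => ρ q.2) L hLne hmono
  have hfst : L.map (fun q => ρ q.1) = c.map ρ := by
    have : L.map (fun q => ρ q.1) = (L.map Prod.fst).map ρ := by
      rw [List.map_map]; rfl
    rw [this, hLdef, List.map_fst_zip (by rw [List.length_rotate])]
  have hsnd : L.map (fun q => ρ q.2) = (c.rotate 1).map ρ := by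
    have : L.map (fun q => ρ q.2) = (L.map Prod.snd).map ρ := by
      rw [List.map_map]; rfl
    rw [this, hLdef, List.map_snd_zip (by rw [List.length_rotate])]
  rw [hfst, hsnd] at hsum
  have hperm : ((c.rotate 1).map ρ).sum = (c.map ρ).sum :=
    ((List.rotate_perm c 1).map ρ).sum_eq
  omega

end SRO




/-- Let `(G, S, r)` be a minimal `3`-regular instance of Steiner
Rooted `k`-Orientation with `t` terminals and `D` a feasible orientation. If
`X` is a tight `s`-cut for every `s` in a nonempty `S' ⊆ S`, then `X` contains no
directed cycle that is essential only for terminals in `S'`. -/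
theorem no_cycle_in_common_tight_cut {α : Type} [DecidableEq α]
    (G : MGraph α) (r : α) (S : Finset α) (k t : ℕ)
    (hrS : r ∉ S) (hcard : S.card = t)
    (hr : r ∈ G.verts) (hS : ↑S ⊆ (G.verts : Set α))
    (hreg : G.ThreeRegularInstance r S k) (hmin : G.MinimalInstance r S k)
    (D : MDigraph α) (hor : G.IsOrientation D) (hfeas : D.SteinerRooted r S k)
    (S' : Finset α) (hne : S'.Nonempty) (hsub : S' ⊆ S)
    (X : Finset α) (hX : ∀ s ∈ S', D.IsTightCut r s k X) :
    ¬ ∃ c : List α, D.IsDicycle c ∧ (∀ x ∈ c, x ∈ X) ∧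
      (∃ s ∈ S, D.IsEssential r s k c) ∧
      (∀ s ∈ S, D.IsEssential r s k c → s ∈ S') := by

  classical
  rintro ⟨c, ⟨hcnd, hclen, hcK⟩, hcX, -, honly⟩
  obtain ⟨s₀, hs₀⟩ := hne
  have hs₀S : s₀ ∈ S := hsub hs₀
  -- minimum cut bound from feasibility
  have hmincut : ∀ s ∈ S, ∀ U : Finset α, r ∈ U → s ∉ U → k ≤ SRO.dout D.arcs U :=
    fun s hs U hrU hsU => SRO.cut_lb (hfeas s hs) hrU hsU
  set L : List (α × α) := c.zip (c.rotate 1) with hLdef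
  have hKL : MDigraph.cycleArcs c = (L : Multiset (α × α)) := rfl
  -- the family of tight cuts avoiding all of S'
  set Pcut : Finset α → Prop :=
    fun Wc => r ∈ Wc ∧ (∀ s' ∈ S', s' ∉ Wc) ∧ SRO.dout D.arcs Wc = k with hPdef
  -- no cross arcs between two such cuts
  have hnc : ∀ W₁ W₂, Pcut W₁ → Pcut W₂ → ∀ q ∈ L,
      ¬(q.1 ∈ W₁ ∧ q.1 ∉ W₂ ∧ q.2 ∈ W₂ ∧ q.2 ∉ W₁) := by
    intro W₁ W₂ h₁ h₂ q hq hcontra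
    have hqA : q ∈ D.arcs := Multiset.mem_of_le hcK (by rw [hKL]; exact Multiset.mem_coe.2 hq)
    have hsm := SRO.submod D.arcs W₁ W₂
    have hi : k ≤ SRO.dout D.arcs (W₁ ∩ W₂) :=
      hmincut s₀ hs₀S _ (Finset.mem_inter.2 ⟨h₁.1, h₂.1⟩)
        (fun hmem => h₁.2.1 s₀ hs₀ (Finset.mem_inter.1 hmem).1)
    have hu : k ≤ SRO.dout D.arcs (W₁ ∪ W₂) :=
      hmincut s₀ hs₀S _ (Finset.mem_union.2 (Or.inl h₁.1))
        (fun hmem => (Finset.mem_union.1 hmem).elim (h₁.2.1 s₀ hs₀) (h₂.2.1 s₀ hs₀))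
    have hd1 : SRO.dout D.arcs W₁ = k := h₁.2.2
    have hd2 : SRO.dout D.arcs W₂ = k := h₂.2.2
    have hcr : SRO.cross D.arcs W₁ W₂ = 0 := by omega
    have hqmem : q ∈ D.arcs.filter
        (fun e => (e.1 ∈ W₁ ∧ e.1 ∉ W₂) ∧ (e.2 ∈ W₂ ∧ e.2 ∉ W₁)) :=
      Multiset.mem_filter.2 ⟨hqA, ⟨⟨hcontra.1, hcontra.2.1⟩, hcontra.2.2.1, hcontra.2.2.2⟩⟩
    have : 0 < SRO.cross D.arcs W₁ W₂ := Multiset.card_pos_iff_exists_mem.2 ⟨q, hqmem⟩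
    omega
  -- a good arc of the cycle
  obtain ⟨a, haL, hgood⟩ := SRO.exists_good_arc c hclen Pcut hnc
  have haK : a ∈ MDigraph.cycleArcs c := by rw [hKL]; exact Multiset.mem_coe.2 haL
  have haA : a ∈ D.arcs := Multiset.mem_of_le hcK haK
  have hac := List.of_mem_zip haL
  have ha1c : a.1 ∈ c := hac.1
  have ha2c : a.2 ∈ c := (List.mem_rotate).1 hac.2
  -- the modified orientation
  set K : Multiset (α × α) := MDigraph.cycleArcs c with hKdef
  set A2 : Multiset (α × α) := (D.arcs - K) + (K.erase a).map Prod.swap with hA2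
  have hmemA2 : ∀ b ∈ A2, ∃ b' ∈ D.arcs, b = b' ∨ b = Prod.swap b' := by
    intro b hb
    rcases Multiset.mem_add.1 hb with hb1 | hb2
    · exact ⟨b, Multiset.mem_of_le tsub_le_self hb1, Or.inl rfl⟩
    · obtain ⟨b', hb', rfl⟩ := Multiset.mem_map.1 hb2
      exact ⟨b', Multiset.mem_of_le hcK (Multiset.mem_of_le (Multiset.erase_le a K) hb'),
        Or.inr rfl⟩
  set D2 : MDigraph α :=
    { verts := D.verts
      arcs := A2
      tail_mem := by
        intro b hb
        obtain ⟨b', hb', hor'⟩ := hmemA2 b hb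
        rcases hor' with h | h
        · rw [h]; exact D.tail_mem b' hb'
        · rw [h]; exact D.head_mem b' hb'
      head_mem := by
        intro b hb
        obtain ⟨b', hb', hor'⟩ := hmemA2 b hb
        rcases hor' with h | h
        · rw [h]; exact D.head_mem b' hb'
        · rw [h]; exact D.tail_mem b' hb'
      loopless := by
        intro b hb
        obtain ⟨b', hb', hor'⟩ := hmemA2 b hb
        rcases hor' with h | h
        · rw [h]; exact D.loopless b' hb'
        · rw [h]; exact (D.loopless b' hb').symm } with hD2
  -- cut formula
  have hcut2 : ∀ U : Finset α, SRO.dout A2 U + (if a.1 ∉ U ∧ a.2 ∈ U then 1 else 0)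
      = SRO.dout D.arcs U :=
    SRO.dout_mod D.arcs K hcK a haK (fun U => SRO.cycle_balance c U)
  -- cut condition for the modified orientation
  have hcuts : ∀ s ∈ S, ∀ U : Finset α, r ∈ U → s ∉ U → k ≤ SRO.dout A2 U := by
    intro s hs U hrU hsU
    have h1 := hmincut s hs U hrU hsU
    have h2 := hcut2 U
    by_cases henter : a.1 ∉ U ∧ a.2 ∈ U
    · by_cases htight : SRO.dout D.arcs U = k
      · exfalso
        have hess : D.IsEssential r s k c :=
          ⟨U, ⟨hrU, hsU, htight⟩, ⟨a.2, ha2c, henter.2⟩, ⟨a.1, ha1c, henter.1⟩⟩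
        have hsS' : s ∈ S' := honly s hs hess
        obtain ⟨hXr, hXs, hXd⟩ := hX s hsS'
        have hsm := SRO.submod D.arcs U X
        have hi : k ≤ SRO.dout D.arcs (U ∩ X) :=
          hmincut s hs _ (Finset.mem_inter.2 ⟨hrU, hXr⟩)
            (fun hmem => hsU (Finset.mem_inter.1 hmem).1)
        have hu : k ≤ SRO.dout D.arcs (U ∪ X) :=
          hmincut s hs _ (Finset.mem_union.2 (Or.inl hrU))
            (fun hmem => (Finset.mem_union.1 hmem).elim hsU hXs)
        have hXd' : SRO.dout D.arcs X = k := hXd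
        have hIk : SRO.dout D.arcs (U ∩ X) = k := by omega
        refine hgood (U ∩ X) ⟨Finset.mem_inter.2 ⟨hrU, hXr⟩, ?_, hIk⟩
          ⟨fun hmem => henter.1 (Finset.mem_inter.1 hmem).1,
            Finset.mem_inter.2 ⟨henter.2, hcX a.2 ha2c⟩⟩
        intro s' hs' hmem
        exact (hX s' hs').2.1 (Finset.mem_inter.1 hmem).2
      · rw [if_pos henter] at h2
        omega
    · rw [if_neg henter] at h2
      omega
  -- Steiner rootedness of the modified orientation, via Menger
  have hrD2 : r ∈ D2.verts := by rw [hD2]; rw [hor.1]; exact hr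
  have hst2 : D2.SteinerRooted r S k := by
    intro s hs
    refine SRO.menger D2 r s hrD2 (fun h => hrS (h ▸ hs)) k ?_
    intro U hrU hsU
    exact hcuts s hs U hrU hsU
  -- the modified orientation orients G minus an edge
  set e : Sym2 α := s(a.1, a.2) with hedef
  have heG : e ∈ G.edges := by
    rw [← hor.2]
    exact Multiset.mem_map_of_mem _ haA
  have horient : (G.delEdge e).IsOrientation D2 := by
    constructor
    · rw [hD2]
      exact hor.1
    · show A2.map (fun b => s(b.1, b.2)) = (G.delEdge e).edges
      set f : α × α → Sym2 α := fun b => s(b.1, b.2) with hf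
      have hswap : ∀ M : Multiset (α × α), (M.map Prod.swap).map f = M.map f := by
        intro M
        rw [Multiset.map_map]
        exact Multiset.map_congr rfl (fun p _ => Sym2.eq_swap)
      have h1 : A2.map f = (D.arcs - K).map f + ((K.erase a).map f) := by
        rw [hA2, Multiset.map_add, hswap]
      have h2 : (K.erase a).map f = (K.map f).erase (f a) :=
        SRO.map_erase_mem f haK
      have h3 : (D.arcs - K).map f + (K.map f).erase (f a)
          = ((D.arcs - K).map f + K.map f).erase (f a) :=
        (Multiset.erase_add_right_pos _ (Multiset.mem_map_of_mem f haK)).symm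
      have h4 : (D.arcs - K).map f + K.map f = D.arcs.map f := by
        rw [← Multiset.map_add, tsub_add_cancel_of_le hcK]
      rw [h1, h2, h3, h4]
      show (D.arcs.map f).erase (f a) = G.edges.erase e
      rw [hor.2]
  exact hmin.2 e heG ⟨D2, horient, hst2⟩
end

section
/- Let D be a directed graph and let r, v, s be vertices of D. Let D' be the directed graph obtained from D by adding one new arc from r to v and one new arc from v to s. Then λ_{D'}(r, s) = λ_D(r, s) + 1. -/
/-- `λ_D(u, v)`: the maximum number of pairwise arc-disjoint directed paths
from `u` to `v` in `D` (as an extended natural number). -/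
noncomputable def MDigraph.lambda {α : Type} (D : MDigraph α) (u v : α) : ℕ∞ :=
  ⨆ k ∈ {k : ℕ | D.HasArcDisjointPaths u v k}, (k : ℕ∞)

namespace MDigraphAux

open MDigraph List

variable {α : Type} [DecidableEq α]

lemma pA_nil : pathArcs ([] : List α) = 0 := rfl

lemma pA_single (a : α) : pathArcs [a] = 0 := rfl

lemma pA_cons_cons (a b : α) (l : List α) :
    pathArcs (a :: b :: l) = (a, b) ::ₘ pathArcs (b :: l) := rfl

lemma pA_glue : ∀ (l1 : List α) {l2 : List α} {x : α},
    l1.getLast? = some x → l2.head? = some x →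
    pathArcs (l1 ++ l2.tail) = pathArcs l1 + pathArcs l2
  | [], _, _, h1, _ => by simp at h1
  | [a], l2, x, h1, h2 => by
      obtain ⟨y, t2, rfl⟩ : ∃ y t2, l2 = y :: t2 := by
        cases l2 with
        | nil => simp at h2
        | cons y t2 => exact ⟨y, t2, rfl⟩
      simp only [List.getLast?_singleton, Option.some.injEq] at h1
      simp only [List.head?_cons, Option.some.injEq] at h2
      subst h1; subst h2
      simp [pA_single]
  | a :: b :: t, l2, x, h1, h2 => by
      have h1' : (b :: t).getLast? = some x := by
        rwa [List.getLast?_cons_cons] at h1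
      have := pA_glue (b :: t) h1' h2
      show pathArcs (a :: b :: (t ++ l2.tail)) = _
      rw [pA_cons_cons, pA_cons_cons]
      show (a, b) ::ₘ pathArcs ((b :: t) ++ l2.tail) = _
      rw [this, Multiset.cons_add]

lemma mem_pathArcs_decomp : ∀ (l : List α) {x y : α},
    (x, y) ∈ pathArcs l → ∃ l1 l2, l = l1 ++ x :: y :: l2
  | [], x, y, h => by simp [pA_nil] at h
  | [a], x, y, h => by simp [pA_single] at h
  | a :: b :: t, x, y, h => by
      rw [pA_cons_cons, Multiset.mem_cons] at h
      rcases h with h | h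
      · obtain ⟨rfl, rfl⟩ : x = a ∧ y = b := by
          simpa [Prod.ext_iff] using h
        exact ⟨[], t, rfl⟩
      · obtain ⟨l1, l2, hl⟩ := mem_pathArcs_decomp (b :: t) h
        exact ⟨a :: l1, l2, by rw [List.cons_append, ← hl]⟩

lemma not_nodup_decomp : ∀ (l : List α), ¬ l.Nodup →
    ∃ (a b c : List α) (x : α), l = a ++ x :: (b ++ x :: c)
  | [], h => absurd List.nodup_nil h
  | y :: t, h => by
      rw [List.nodup_cons] at h
      by_cases hy : y ∈ t
      · obtain ⟨b, c, rfl⟩ := List.append_of_mem hy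
        exact ⟨[], b, c, y, rfl⟩
      · obtain ⟨a, b, c, x, rfl⟩ := not_nodup_decomp t (fun hn => h ⟨hy, hn⟩)
        exact ⟨y :: a, b, c, x, rfl⟩

lemma chain'_of_pathArcs_le : ∀ (l : List α) {M : Multiset (α × α)},
    pathArcs l ≤ M → l.Chain' (fun x y => (x, y) ∈ M)
  | [], _, _ => List.isChain_nil
  | [a], _, _ => List.isChain_singleton a
  | a :: b :: t, M, h => by
      refine List.isChain_cons_cons.mpr ?_
      rw [pA_cons_cons] at h
      refine ⟨Multiset.mem_of_le h (Multiset.mem_cons_self _ _), ?_⟩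
      exact chain'_of_pathArcs_le (b :: t)
        (le_trans (Multiset.le_cons_self _ _) h)

lemma walk_to_path : ∀ (n : ℕ) (p : List α), p.length ≤ n → ∀ {u v : α},
    p.head? = some u → p.getLast? = some v →
    ∃ q : List α, q.Nodup ∧ q.head? = some u ∧ q.getLast? = some v ∧
      (∀ x ∈ q, x ∈ p) ∧ pathArcs q ≤ pathArcs p := by
  intro n
  induction n with
  | zero =>
      intro p hlen u v h1 h2
      cases p with
      | nil => simp at h1
      | cons a t => simp at hlen
  | succ n ih =>
      intro p hlen u v h1 h2
      by_cases hnd : p.Nodup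
      · exact ⟨p, hnd, h1, h2, fun x hx => hx, le_rfl⟩
      · obtain ⟨a, b, c, x, rfl⟩ := not_nodup_decomp p hnd
        set p' : List α := a ++ x :: c with hp'
        have hxa : (a ++ [x]).getLast? = some x := by
          rw [List.getLast?_append_of_ne_nil a (l₂ := [x]) (by simp)]; rfl
        have e0 : a ++ x :: (b ++ x :: c) = (a ++ [x]) ++ (x :: (b ++ x :: c)).tail := by
          simp
        have e1 : pathArcs (a ++ x :: (b ++ x :: c))
            = pathArcs (a ++ [x]) + pathArcs (x :: (b ++ x :: c)) := by
          rw [e0]; exact pA_glue (a ++ [x]) hxa rfl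
        have e2' : x :: (b ++ x :: c) = ((x :: b) ++ [x]) ++ (x :: c).tail := by simp
        have e2 : pathArcs (x :: (b ++ x :: c))
            = pathArcs ((x :: b) ++ [x]) + pathArcs (x :: c) := by
          rw [e2']
          exact pA_glue ((x :: b) ++ [x])
            (by rw [List.getLast?_append_of_ne_nil _ (l₂ := [x]) (by simp)]; rfl) rfl
        have e3 : pathArcs p' = pathArcs (a ++ [x]) + pathArcs (x :: c) := by
          have : p' = (a ++ [x]) ++ (x :: c).tail := by simp [hp']
          rw [this]; exact pA_glue (a ++ [x]) hxa rfl
        have hple : pathArcs p' ≤ pathArcs (a ++ x :: (b ++ x :: c)) := by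
          rw [e1, e2, e3]
          exact add_le_add_right (Multiset.le_add_left _ _) _
        have hlen' : p'.length ≤ n := by
          simp [hp'] at hlen ⊢; omega
        have h1' : p'.head? = some u := by
          have e : p' = (a ++ [x]) ++ c := by simp [hp']
          have e' : a ++ x :: (b ++ x :: c) = (a ++ [x]) ++ (b ++ x :: c) := by simp
          rw [e, List.head?_append_of_ne_nil _ (by simp)]
          rw [e', List.head?_append_of_ne_nil _ (by simp)] at h1
          exact h1
        have h2' : p'.getLast? = some v := by
          have eq1 : (a ++ x :: (b ++ x :: c)).getLast? = (x :: c).getLast? := by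
            have : a ++ x :: (b ++ x :: c) = (a ++ x :: b) ++ (x :: c) := by simp
            rw [this, List.getLast?_append_of_ne_nil _ (by simp)]
          have eq2 : p'.getLast? = (x :: c).getLast? :=
            List.getLast?_append_of_ne_nil _ (by simp)
          rw [eq2, ← eq1]; exact h2
        have hmem' : ∀ y ∈ p', y ∈ a ++ x :: (b ++ x :: c) := by
          intro y hy
          simp [hp'] at hy ⊢
          tauto
        obtain ⟨q, hq1, hq2, hq3, hq4, hq5⟩ := ih p' hlen' h1' h2'
        exact ⟨q, hq1, hq2, hq3, fun y hy => hmem' y (hq4 y hy),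
          le_trans hq5 hple⟩

lemma msum_mono {β : Type} {s t : Multiset (Multiset β)} (h : s ≤ t) :
    s.sum ≤ t.sum := by
  obtain ⟨u, rfl⟩ := Multiset.le_iff_exists_add.mp h
  rw [Multiset.sum_add]
  exact Multiset.le_add_right _ _

/-- Multiset reformulation of `HasArcDisjointPaths`. -/
def HAD' (D : MDigraph α) (u v : α) (k : ℕ) : Prop :=
  ∃ P : Multiset (List α), Multiset.card P = k ∧ (∀ p ∈ P, D.IsDipath p u v) ∧
    (P.map pathArcs).sum ≤ D.arcs

lemma had_iff {D : MDigraph α} {u v : α} {k : ℕ} :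
    D.HasArcDisjointPaths u v k ↔ HAD' D u v k := by
  constructor
  · rintro ⟨P, hP, hsum⟩
    refine ⟨(List.ofFn P : List (List α)), by simp, ?_, ?_⟩
    · intro p hp
      rw [Multiset.mem_coe, List.mem_ofFn] at hp
      obtain ⟨i, rfl⟩ := hp
      exact hP i
    · calc ((List.ofFn P : Multiset (List α)).map pathArcs).sum
          = ((List.ofFn P).map pathArcs).sum := by
            rw [Multiset.map_coe, Multiset.sum_coe]
        _ = (List.ofFn (pathArcs ∘ P)).sum := by rw [List.map_ofFn]
        _ = ∑ i : Fin k, pathArcs (P i) := Fin.sum_ofFn _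
        _ ≤ D.arcs := hsum
  · rintro ⟨P, hcard, hP, hsum⟩
    have hl : (P.toList : Multiset (List α)) = P := Multiset.coe_toList P
    have hlen : P.toList.length = k := by
      rw [← Multiset.coe_card, hl, hcard]
    subst hlen
    refine ⟨fun i => P.toList.get i, ?_, ?_⟩
    · intro i
      have hm : P.toList.get i ∈ P.toList := List.get_mem _ _
      rw [← Multiset.mem_coe, hl] at hm
      exact hP _ hm
    · calc ∑ i, pathArcs (P.toList.get i)
          = (List.ofFn (pathArcs ∘ P.toList.get)).sum := (Fin.sum_ofFn _).symm
        _ = ((List.ofFn P.toList.get).map pathArcs).sum := by rw [List.map_ofFn]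
        _ = (P.toList.map pathArcs).sum := by rw [List.ofFn_get]
        _ = (P.map pathArcs).sum := by
            rw [← Multiset.sum_coe, ← Multiset.map_coe, hl]
        _ ≤ D.arcs := hsum

lemma had'_succ_down {D : MDigraph α} {u v : α} {k : ℕ} (h : HAD' D u v (k + 1)) :
    HAD' D u v k := by
  obtain ⟨P, hcard, hP, hsum⟩ := h
  obtain ⟨p, hp⟩ : ∃ p, p ∈ P := Multiset.exists_mem_of_ne_zero (by
    intro h0; rw [h0] at hcard; simp at hcard)
  refine ⟨P.erase p, by rw [Multiset.card_erase_of_mem hp, hcard]; rfl,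
    fun q hq => hP q (Multiset.mem_of_mem_erase hq), ?_⟩
  refine le_trans (msum_mono (Multiset.map_le_map (P.erase_le p))) hsum

lemma had'_mono {D : MDigraph α} {u v : α} {j k : ℕ} (hjk : j ≤ k)
    (h : HAD' D u v k) : HAD' D u v j := by
  induction k with
  | zero => simpa [Nat.le_zero.mp hjk]
  | succ n ih =>
      rcases Nat.lt_or_ge j (n + 1) with hlt | hge
      · exact ih (Nat.lt_succ_iff.mp hlt) (had'_succ_down h)
      · have : j = n + 1 := le_antisymm hjk hge
        rwa [this]

end MDigraphAux

namespace MDigraphAux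

open MDigraph List

variable {α : Type} [DecidableEq α]

lemma dipath_transfer {D' D : MDigraph α} {p : List α} {r s : α}
    (hV : D'.verts = D.verts) (h : D'.IsDipath p r s) (harcs : pathArcs p ≤ D.arcs) :
    D.IsDipath p r s :=
  ⟨h.1, h.2.1, h.2.2.1, fun x hx => hV ▸ h.2.2.2.1 x hx, chain'_of_pathArcs_le p harcs⟩

lemma dipath_mono {D D' : MDigraph α} {p : List α} {r s : α}
    (hV : D'.verts = D.verts) (harcs : D.arcs ≤ D'.arcs) (h : D.IsDipath p r s) :
    D'.IsDipath p r s :=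
  ⟨h.1, h.2.1, h.2.2.1, fun x hx => by rw [hV]; exact h.2.2.2.1 x hx,
    List.IsChain.imp (fun a b hab => Multiset.mem_of_le harcs hab) h.2.2.2.2⟩

lemma mem_msum {β : Type} {S : Multiset (Multiset β)} {a : β} :
    a ∈ S.sum ↔ ∃ s ∈ S, a ∈ s := Multiset.mem_join

lemma count_helper {β : Type} [DecidableEq β] {A B S : Multiset β} {a1 a2 : β}
    (h12 : a1 ≠ a2) (hle : A + B ≤ a1 ::ₘ a2 ::ₘ S)
    (h1 : a1 ∈ A + B → a1 ∈ A) (h2 : a2 ∈ A + B → a2 ∈ A) : B ≤ S := by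
  rw [Multiset.le_iff_count] at hle ⊢
  intro e
  have he := hle e
  simp only [Multiset.count_add, Multiset.count_cons] at he
  by_cases e1 : e = a1
  · subst e1
    simp [h12] at he
    by_cases hm : e ∈ A + B
    · have h1' : 1 ≤ Multiset.count e A := Multiset.one_le_count_iff_mem.mpr (h1 hm)
      omega
    · have h0 : Multiset.count e (A + B) = 0 := Multiset.count_eq_zero.mpr hm
      rw [Multiset.count_add] at h0
      omega
  · by_cases e2 : e = a2
    · subst e2
      simp [e1] at he
      by_cases hm : e ∈ A + B
      · have h2' : 1 ≤ Multiset.count e A := Multiset.one_le_count_iff_mem.mpr (h2 hm)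
        omega
      · have h0 : Multiset.count e (A + B) = 0 := Multiset.count_eq_zero.mpr hm
        rw [Multiset.count_add] at h0
        omega
    · simp [e1, e2] at he
      omega

lemma remove_one {D' D : MDigraph α} {r s : α} (hV : D'.verts = D.verts)
    {a1 a2 : α × α} (h12 : a1 ≠ a2) {P : Multiset (List α)} {k : ℕ}
    (hcard : Multiset.card P = k + 1) (hpaths : ∀ p ∈ P, D'.IsDipath p r s)
    (hsum : (P.map pathArcs).sum ≤ a1 ::ₘ a2 ::ₘ D.arcs)
    {p : List α} (hp : p ∈ P)
    (h1 : a1 ∈ (P.map pathArcs).sum → a1 ∈ pathArcs p)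
    (h2 : a2 ∈ (P.map pathArcs).sum → a2 ∈ pathArcs p) :
    HAD' D r s k := by
  have hsplit : (P.map pathArcs).sum = pathArcs p + ((P.erase p).map pathArcs).sum := by
    conv_lhs => rw [← Multiset.cons_erase hp]
    rw [Multiset.map_cons, Multiset.sum_cons]
  rw [hsplit] at hsum h1 h2
  have hres : ((P.erase p).map pathArcs).sum ≤ D.arcs :=
    count_helper h12 hsum h1 h2
  refine ⟨P.erase p, ?_, ?_, hres⟩
  · rw [Multiset.card_erase_of_mem hp, hcard]; rfl
  · intro q hq
    refine dipath_transfer hV (hpaths q (Multiset.mem_of_mem_erase hq)) ?_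
    exact le_trans (Multiset.le_sum_of_mem (Multiset.mem_map_of_mem _ hq)) hres

lemma path_starts {D' : MDigraph α} {p : List α} {r s x : α}
    (h : D'.IsDipath p r s) (hx : (r, x) ∈ pathArcs p) :
    ∃ t, p = r :: x :: t := by
  obtain ⟨l1, l2, rfl⟩ := mem_pathArcs_decomp p hx
  cases l1 with
  | nil => exact ⟨l2, rfl⟩
  | cons a l1' =>
      exfalso
      have ha : a = r := by
        have := h.2.1
        simpa using this
      subst ha
      have hnd := h.1
      rw [List.cons_append, List.nodup_cons] at hnd
      exact hnd.1 (by simp)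

lemma path_ends {D' : MDigraph α} {p : List α} {r s x : α}
    (h : D'.IsDipath p r s) (hx : (x, s) ∈ pathArcs p) :
    ∃ w, p = w ++ [x, s] := by
  obtain ⟨l1, l2, rfl⟩ := mem_pathArcs_decomp p hx
  cases l2 with
  | nil => exact ⟨l1, rfl⟩
  | cons b l2' =>
      exfalso
      have hlast := h.2.2.1
      have e : l1 ++ x :: s :: b :: l2' = (l1 ++ [x, s]) ++ (b :: l2') := by simp
      rw [e, List.getLast?_append_of_ne_nil _ (by simp)] at hlast
      have hs' : s ∈ b :: l2' := List.mem_of_mem_getLast? (by rw [hlast]; rfl)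
      have hnd := h.1
      rw [e, List.nodup_append] at hnd
      exact hnd.2.2 s (by simp) s hs' rfl

lemma stepA {D D' : MDigraph α} {r v s : α} (hrs : r ≠ s) (hrv : r ≠ v) (hvs : v ≠ s)
    (hr : r ∈ D.verts) (hv : v ∈ D.verts) (hs : s ∈ D.verts)
    (hV : D'.verts = D.verts) (hA : D'.arcs = (r, v) ::ₘ (v, s) ::ₘ D.arcs)
    {k : ℕ} (h : HAD' D r s k) : HAD' D' r s (k + 1) := by
  obtain ⟨P, hcard, hpaths, hsum⟩ := h
  refine ⟨[r, v, s] ::ₘ P, by simp [hcard], ?_, ?_⟩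
  · intro p hp
    rcases Multiset.mem_cons.mp hp with rfl | hp
    · refine ⟨by simp [hrv, hrs, hvs], rfl, rfl, ?_, ?_⟩
      · intro x hx; rw [hV]
        simp only [List.mem_cons, List.not_mem_nil, or_false] at hx
        rcases hx with rfl | rfl | rfl <;> assumption
      · refine List.isChain_cons_cons.mpr ⟨?_, List.isChain_cons_cons.mpr ⟨?_, List.isChain_singleton _⟩⟩
        · rw [hA]; exact Multiset.mem_cons_self _ _
        · rw [hA]; exact Multiset.mem_cons_of_mem (Multiset.mem_cons_self _ _)
    · exact dipath_mono hV
        (by rw [hA]; exact le_trans (Multiset.le_cons_self _ _) (Multiset.le_cons_self _ _))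
        (hpaths p hp)
  · rw [Multiset.map_cons, Multiset.sum_cons, hA]
    have e : pathArcs [r, v, s] = (r, v) ::ₘ (v, s) ::ₘ 0 := rfl
    rw [e, Multiset.cons_add, Multiset.cons_add, zero_add]
    exact Multiset.cons_le_cons _ (Multiset.cons_le_cons _ hsum)

lemma stepB {D D' : MDigraph α} {r v s : α} (hrv : r ≠ v) (hvs : v ≠ s)
    (hV : D'.verts = D.verts) (hA : D'.arcs = (r, v) ::ₘ (v, s) ::ₘ D.arcs)
    {k : ℕ} (h : HAD' D' r s (k + 1)) : HAD' D r s k := by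
  obtain ⟨P, hcard, hpaths, hsum⟩ := h
  rw [hA] at hsum
  have h12 : ((r, v) : α × α) ≠ (v, s) := fun h' => hrv (congrArg Prod.fst h')
  by_cases H : ∃ p ∈ P, (r, v) ∈ pathArcs p ∧ (v, s) ∈ pathArcs p
  · obtain ⟨p, hp, h1, h2⟩ := H
    exact remove_one hV h12 hcard hpaths hsum hp (fun _ => h1) (fun _ => h2)
  · push_neg at H
    by_cases H1 : ∃ p ∈ P, (r, v) ∈ pathArcs p
    · obtain ⟨p, hp, hpa1⟩ := H1
      by_cases H2 : ∃ p' ∈ P, (v, s) ∈ pathArcs p'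
      · obtain ⟨p', hp', hpa2⟩ := H2
        have hpna2 : (v, s) ∉ pathArcs p := fun h' => H p hp hpa1 h'
        have hne : p' ≠ p := fun h' => hpna2 (h' ▸ hpa2)
        obtain ⟨ti, rfl⟩ := path_starts (hpaths p hp) hpa1
        obtain ⟨w0, hp'e⟩ := path_ends (hpaths p' hp') hpa2
        set w : List α := w0 ++ [v] with hw
        have hwne : w ≠ [] := by simp [hw]
        have hwlast : w.getLast? = some v := by
          rw [hw, List.getLast?_append_of_ne_nil _ (by simp)]; rfl
        have hp'w : p' = w ++ [s] := by simp [hw, hp'e]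
        have htine : ti ≠ [] := by
          intro h0
          have hl := (hpaths _ hp).2.2.1
          rw [h0] at hl
          have : v = s := by simpa [List.getLast?] using hl
          exact hvs this
        set W : List α := w ++ ti with hW
        have hWhead : W.head? = some r := by
          have h1 := (hpaths _ hp').2.1
          rw [hp'w, List.head?_append_of_ne_nil _ hwne] at h1
          rw [hW, List.head?_append_of_ne_nil _ hwne]
          exact h1
        have hWlast : W.getLast? = some s := by
          have h2 := (hpaths _ hp).2.2.1
          have e : r :: v :: ti = [r, v] ++ ti := rfl
          rw [e, List.getLast?_append_of_ne_nil _ htine] at h2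
          rw [hW, List.getLast?_append_of_ne_nil _ htine]
          exact h2
        have harcp : pathArcs (r :: v :: ti) = (r, v) ::ₘ pathArcs (v :: ti) :=
          pA_cons_cons _ _ _
        have harcp' : pathArcs p' = pathArcs w + pathArcs [v, s] := by
          have e : p' = w ++ ([v, s] : List α).tail := by simp [hp'w]
          rw [e]; exact pA_glue w hwlast rfl
        have harcW : pathArcs W = pathArcs w + pathArcs (v :: ti) := by
          have e : W = w ++ (v :: ti).tail := rfl
          rw [e]; exact pA_glue w hwlast rfl
        have hvs_arc : pathArcs [v, s] = {(v, s)} := rfl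
        have hkey : (r, v) ::ₘ (v, s) ::ₘ pathArcs W
            = pathArcs (r :: v :: ti) + pathArcs p' := by
          rw [harcW, harcp, harcp', hvs_arc]
          rw [← Multiset.singleton_add, ← Multiset.singleton_add, ← Multiset.singleton_add]
          abel
        have hp'mem : p' ∈ P.erase (r :: v :: ti) := (Multiset.mem_erase_of_ne hne).mpr hp'
        set R : Multiset (α × α) := (((P.erase (r :: v :: ti)).erase p').map pathArcs).sum
          with hR
        have hsplit : (P.map pathArcs).sum = pathArcs (r :: v :: ti) + (pathArcs p' + R) := by
          conv_lhs => rw [← Multiset.cons_erase hp, ← Multiset.cons_erase hp'mem]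
          rw [Multiset.map_cons, Multiset.sum_cons, Multiset.map_cons, Multiset.sum_cons]
        have hWR : pathArcs W + R ≤ D.arcs := by
          have e : (r, v) ::ₘ (v, s) ::ₘ (pathArcs W + R) ≤ (r, v) ::ₘ (v, s) ::ₘ D.arcs := by
            calc (r, v) ::ₘ (v, s) ::ₘ (pathArcs W + R)
                = ((r, v) ::ₘ (v, s) ::ₘ pathArcs W) + R := by
                  rw [Multiset.cons_add, Multiset.cons_add]
              _ = pathArcs (r :: v :: ti) + (pathArcs p' + R) := by rw [hkey, add_assoc]
              _ = (P.map pathArcs).sum := hsplit.symm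
              _ ≤ _ := hsum
          exact (Multiset.cons_le_cons_iff _).mp ((Multiset.cons_le_cons_iff _).mp e)
        obtain ⟨q, hq1, hq2, hq3, hq4, hq5⟩ :=
          walk_to_path W.length W le_rfl hWhead hWlast
        have hqarcs : pathArcs q ≤ D.arcs :=
          le_trans hq5 (le_trans (Multiset.le_add_right _ _) hWR)
        refine ⟨q ::ₘ (P.erase (r :: v :: ti)).erase p', ?_, ?_, ?_⟩
        · have h1c := Multiset.card_erase_of_mem hp
          have h2c := Multiset.card_erase_of_mem hp'mem
          have hpos : 0 < Multiset.card (P.erase (r :: v :: ti)) :=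
            Multiset.card_pos_iff_exists_mem.mpr ⟨p', hp'mem⟩
          rw [Multiset.card_cons, h2c, h1c, hcard]
          rw [h1c, hcard] at hpos
          simp only [Nat.pred_succ] at hpos ⊢
          exact Nat.succ_pred_eq_of_pos hpos
        · intro x hx
          rcases Multiset.mem_cons.mp hx with rfl | hx
          · have hvertsW : ∀ y ∈ W, y ∈ D.verts := by
              intro y hyW
              rw [hW, List.mem_append] at hyW
              rw [← hV]
              rcases hyW with hyw | hyt
              · exact (hpaths _ hp').2.2.2.1 y (by rw [hp'w]; exact List.mem_append_left _ hyw)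
              · exact (hpaths _ hp).2.2.2.1 y (by simp [hyt])
            exact ⟨hq1, hq2, hq3, fun y hyq => hvertsW y (hq4 y hyq),
              chain'_of_pathArcs_le _ hqarcs⟩
          · have hxP : x ∈ P := Multiset.mem_of_mem_erase (Multiset.mem_of_mem_erase hx)
            refine dipath_transfer hV (hpaths x hxP) ?_
            refine le_trans (Multiset.le_sum_of_mem (Multiset.mem_map_of_mem _ hx)) ?_
            exact le_trans (Multiset.le_add_left _ _) hWR
        · rw [Multiset.map_cons, Multiset.sum_cons]
          exact le_trans (add_le_add_left hq5 _) hWR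
      · refine remove_one hV h12 hcard hpaths hsum hp (fun _ => hpa1) ?_
        intro hmem
        exfalso
        obtain ⟨m, hm, hminm⟩ := mem_msum.mp hmem
        obtain ⟨p0, hp0, rfl⟩ := Multiset.mem_map.mp hm
        exact H2 ⟨p0, hp0, hminm⟩
    · by_cases H2 : ∃ p' ∈ P, (v, s) ∈ pathArcs p'
      · obtain ⟨p', hp', hpa2⟩ := H2
        refine remove_one hV h12 hcard hpaths hsum hp' ?_ (fun _ => hpa2)
        intro hmem
        exfalso
        obtain ⟨m, hm, hminm⟩ := mem_msum.mp hmem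
        obtain ⟨p0, hp0, rfl⟩ := Multiset.mem_map.mp hm
        exact H1 ⟨p0, hp0, hminm⟩
      · obtain ⟨p, hp⟩ : ∃ p, p ∈ P := Multiset.exists_mem_of_ne_zero (by
          intro h0; rw [h0] at hcard; simp at hcard)
        refine remove_one hV h12 hcard hpaths hsum hp ?_ ?_
        · intro hmem
          exfalso
          obtain ⟨m, hm, hminm⟩ := mem_msum.mp hmem
          obtain ⟨p0, hp0, rfl⟩ := Multiset.mem_map.mp hm
          exact H1 ⟨p0, hp0, hminm⟩
        · intro hmem
          exfalso
          obtain ⟨m, hm, hminm⟩ := mem_msum.mp hmem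
          obtain ⟨p0, hp0, rfl⟩ := Multiset.mem_map.mp hm
          exact H2 ⟨p0, hp0, hminm⟩

lemma lambda_le_of_all {D : MDigraph α} {u v : α} {n : ℕ}
    (h : ∀ k, D.HasArcDisjointPaths u v k → k ≤ n) : D.lambda u v ≤ n := by
  rw [MDigraph.lambda]
  refine iSup₂_le ?_
  intro k hk
  exact_mod_cast h k hk

lemma le_lambda {D : MDigraph α} {u v : α} {n : ℕ} (h : D.HasArcDisjointPaths u v n) :
    (n : ℕ∞) ≤ D.lambda u v := by
  rw [MDigraph.lambda]
  exact le_iSup₂ (f := fun (k : ℕ) (_ : k ∈ {k : ℕ | D.HasArcDisjointPaths u v k}) => (k : ℕ∞))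
    n h

lemma lambda_eq_top {D : MDigraph α} {u v : α} (h : ∀ k, D.HasArcDisjointPaths u v k) :
    D.lambda u v = ⊤ := by
  by_contra hne
  lift D.lambda u v to ℕ using hne with n hn
  have h1 : ((n + 1 : ℕ) : ℕ∞) ≤ (n : ℕ∞) := hn ▸ le_lambda (h (n + 1))
  have : n + 1 ≤ n := by exact_mod_cast h1
  omega

lemma lambda_eq_coe {D : MDigraph α} {u v : α} {n : ℕ}
    (h1 : D.HasArcDisjointPaths u v n)
    (h2 : ∀ k, D.HasArcDisjointPaths u v k → k ≤ n) : D.lambda u v = n :=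
  le_antisymm (lambda_le_of_all h2) (le_lambda h1)

end MDigraphAux

/-- Let `D` be a directed graph and `r, v, s` vertices of `D`, and
let `D'` be obtained from `D` by adding one new arc from `r` to `v` and one new arc
from `v` to `s`. Then `λ_{D'}(r, s) = λ_D(r, s) + 1`. -/
theorem lambda_add_two_arcs {α : Type} (D D' : MDigraph α) (r v s : α)
    (hr : r ∈ D.verts) (hv : v ∈ D.verts) (hs : s ∈ D.verts)
    (hV : D'.verts = D.verts)
    (hA : D'.arcs = (r, v) ::ₘ (v, s) ::ₘ D.arcs) :
    D'.lambda r s = D.lambda r s + 1 := by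
  classical
  have _inst : DecidableEq α := Classical.decEq α
  have hrv : r ≠ v := D'.loopless (r, v) (by rw [hA]; exact Multiset.mem_cons_self _ _)
  have hvs : v ≠ s := D'.loopless (v, s)
    (by rw [hA]; exact Multiset.mem_cons_of_mem (Multiset.mem_cons_self _ _))
  by_cases hrs : r = s
  · subst hrs
    have hD : ∀ k, D.HasArcDisjointPaths r r k := by
      intro k
      refine MDigraphAux.had_iff.mpr ⟨Multiset.replicate k [r], by simp, ?_, ?_⟩
      · intro p hp
        rw [Multiset.eq_of_mem_replicate hp]
        exact ⟨by simp, rfl, rfl, by simpa using hr, List.isChain_singleton r⟩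
      · rw [Multiset.map_replicate]
        have e : MDigraph.pathArcs ([r] : List α) = 0 := rfl
        rw [e, Multiset.sum_replicate, smul_zero]
        exact Multiset.zero_le _
    have hD' : ∀ k, D'.HasArcDisjointPaths r r k := by
      intro k
      refine MDigraphAux.had_iff.mpr ⟨Multiset.replicate k [r], by simp, ?_, ?_⟩
      · intro p hp
        rw [Multiset.eq_of_mem_replicate hp]
        exact ⟨by simp, rfl, rfl, by simp [hV, hr], List.isChain_singleton r⟩
      · rw [Multiset.map_replicate]
        have e : MDigraph.pathArcs ([r] : List α) = 0 := rfl
        rw [e, Multiset.sum_replicate, smul_zero]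
        exact Multiset.zero_le _
    rw [MDigraphAux.lambda_eq_top hD, MDigraphAux.lambda_eq_top hD']
    rfl
  · have hAstep : ∀ k, MDigraphAux.HAD' D r s k → MDigraphAux.HAD' D' r s (k + 1) :=
      fun _ => MDigraphAux.stepA hrs hrv hvs hr hv hs hV hA
    have hBstep : ∀ k, MDigraphAux.HAD' D' r s (k + 1) → MDigraphAux.HAD' D r s k :=
      fun _ => MDigraphAux.stepB hrv hvs hV hA
    by_cases hall : ∀ k, D.HasArcDisjointPaths r s k
    · have hall' : ∀ k, D'.HasArcDisjointPaths r s k := by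
        intro k
        exact MDigraphAux.had_iff.mpr (MDigraphAux.had'_mono (Nat.le_succ k) (hAstep k (MDigraphAux.had_iff.mp (hall k))))
      rw [MDigraphAux.lambda_eq_top hall, MDigraphAux.lambda_eq_top hall']
      rfl
    · push_neg at hall
      have hex : ∃ k, ¬ D.HasArcDisjointPaths r s k := hall
      have hm := Nat.find_spec hex
      have had0 : D.HasArcDisjointPaths r s 0 :=
        MDigraphAux.had_iff.mpr ⟨0, by simp, by simp, by simp⟩
      have hmpos : 0 < Nat.find hex :=
        Nat.pos_of_ne_zero (fun h0 => (h0 ▸ hm) had0)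
      set n := Nat.find hex - 1 with hn_def
      have hfind : Nat.find hex = n + 1 := (Nat.succ_pred_eq_of_pos hmpos).symm
      have hn : D.HasArcDisjointPaths r s n := by
        by_contra hc
        exact Nat.find_min hex (by omega) hc
      have hnot : ¬ D.HasArcDisjointPaths r s (n + 1) := hfind ▸ hm
      have hmaxD : ∀ k, D.HasArcDisjointPaths r s k → k ≤ n := by
        intro k hk
        by_contra hgt
        push_neg at hgt
        exact hnot (MDigraphAux.had_iff.mpr (MDigraphAux.had'_mono (by omega) (MDigraphAux.had_iff.mp hk)))
      have hn' : D'.HasArcDisjointPaths r s (n + 1) :=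
        MDigraphAux.had_iff.mpr (hAstep n (MDigraphAux.had_iff.mp hn))
      have hmaxD' : ∀ k, D'.HasArcDisjointPaths r s k → k ≤ n + 1 := by
        intro k hk
        by_contra hgt
        push_neg at hgt
        have h2 : MDigraphAux.HAD' D' r s (n + 1 + 1) := MDigraphAux.had'_mono (by omega) (MDigraphAux.had_iff.mp hk)
        exact hnot (MDigraphAux.had_iff.mpr (hBstep (n + 1) h2))
      rw [MDigraphAux.lambda_eq_coe hn hmaxD, MDigraphAux.lambda_eq_coe hn' hmaxD']
      push_cast
      rfl
end
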